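/- arXiv:math/0005079 — 5 statements merged into one kernel-verified Lean document; each statement's English description precedes it below -/
import Mathlib

section
/- Let H be an index-two normal subgroup of a finite group K, and let U be an irreducible real H-module whose character is K-invariant. If W is a K-module whose restriction to H is isomorphic to U (a K-extension of U), then W is irreducible, and m(W)·d(W) = d(U), where m(W) is the multiplicity of W in the induced module Ind_H^K U, d(W) = dim_R Hom_K(W,W), and d(U) = dim_R Hom_H(U,U). -/
open Module

/-- Restriction of a representation to a subgroup. -/
def resRep {K : Type*} [Group K] (H : Subgroup K) {U : Type*} [AddCommGroup U] [Module ℝ U]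
    (ψ : Representation ℝ K U) : Representation ℝ H U :=
  ψ.comp H.subtype

/-- A representation is irreducible: nonzero space and no proper nonzero invariant submodule. -/
def IsIrreducibleRep {G U : Type*} [Group G] [AddCommGroup U] [Module ℝ U]
    (ρ : Representation ℝ G U) : Prop :=
  (∃ u : U, u ≠ 0) ∧
    ∀ p : Submodule ℝ U, (∀ (g : G) (u : U), u ∈ p → ρ g u ∈ p) → p = ⊥ ∨ p = ⊤

/-- The space of equivariant linear maps between two representations. -/
def repHom {G U V : Type*} [Group G] [AddCommGroup U] [Module ℝ U] [AddCommGroup V]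
    [Module ℝ V] (ρ : Representation ℝ G U) (ψ : Representation ℝ G V) :
    Submodule ℝ (U →ₗ[ℝ] V) where
  carrier := {f | ∀ (g : G) (u : U), f (ρ g u) = ψ g (f u)}
  add_mem' := by
    intro f f' hf hf' g u
    simp [hf g u, hf' g u]
  zero_mem' := by intro g u; simp
  smul_mem' := by
    intro c f hf g u
    simp [hf g u]

/-- Isomorphism of representations. -/
def RepIso {G U V : Type*} [Group G] [AddCommGroup U] [Module ℝ U] [AddCommGroup V]
    [Module ℝ V] (ρ : Representation ℝ G U) (ψ : Representation ℝ G V) : Prop :=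
  ∃ e : U ≃ₗ[ℝ] V, ∀ (g : G) (u : U), e (ρ g u) = ψ g (e u)

/-- The character of a representation of a subgroup is invariant under conjugation by the
ambient group. -/
def charConjInvariant {K U : Type*} [Group K] [AddCommGroup U] [Module ℝ U] (H : Subgroup K)
    (ρ : Representation ℝ H U) : Prop :=
  ∀ (g : K) (h k : H), (k : K) = g⁻¹ * h * g →
    LinearMap.trace ℝ U (ρ k) = LinearMap.trace ℝ U (ρ h)

/-- The carrier of the induced representation `Ind_H^K U`. -/
def indSubmodule {K U : Type*} [Group K] [AddCommGroup U] [Module ℝ U] (H : Subgroup K)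
    (ρ : Representation ℝ H U) : Submodule ℝ (K → U) where
  carrier := {f | ∀ (h : H) (k : K), f (h * k) = ρ h (f k)}
  add_mem' := by
    intro f f' hf hf' h k
    simp [hf h k, hf' h k]
  zero_mem' := by intro h k; simp
  smul_mem' := by
    intro c f hf h k
    simp [hf h k]

/-- The induced representation `Ind_H^K U`. -/
def indRep {K U : Type*} [Group K] [AddCommGroup U] [Module ℝ U] (H : Subgroup K)
    (ρ : Representation ℝ H U) : Representation ℝ K (indSubmodule H ρ) where
  toFun g :=
    { toFun := fun f => ⟨fun k => f.1 (k * g), by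
        intro h k
        dsimp only
        rw [mul_assoc]
        exact f.2 h (k * g)⟩
      map_add' := by intro f f'; rfl
      map_smul' := by intro c f; rfl }
  map_one' := by
    refine LinearMap.ext fun f => Subtype.ext (funext fun k => ?_)
    simp
  map_mul' := by
    intro g g'
    refine LinearMap.ext fun f => Subtype.ext (funext fun k => ?_)
    simp [mul_assoc]

/-- The direct sum of two copies of a representation. -/
def doubleRep {G U : Type*} [Group G] [AddCommGroup U] [Module ℝ U]
    (ρ : Representation ℝ G U) : Representation ℝ G (U × U) where
  toFun g := (ρ g).prodMap (ρ g)
  map_one' := by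
    refine LinearMap.ext fun u => ?_
    simp
  map_mul' := by
    intro g g'
    refine LinearMap.ext fun u => ?_
    simp [Module.End.mul_apply]

/-- The real dimension of the space of equivariant linear maps. -/
noncomputable def dimRepHom {G U V : Type*} [Group G] [AddCommGroup U] [Module ℝ U]
    [AddCommGroup V] [Module ℝ V] (ρ : Representation ℝ G U)
    (ψ : Representation ℝ G V) : ℕ :=
  Module.finrank ℝ (repHom ρ ψ)

section Aux

/-- Transport `repHom` along intertwining linear equivalences. -/
noncomputable def repHomCongr {G U₁ V₁ U₂ V₂ : Type*} [Group G]
    [AddCommGroup U₁] [Module ℝ U₁] [AddCommGroup V₁] [Module ℝ V₁]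
    [AddCommGroup U₂] [Module ℝ U₂] [AddCommGroup V₂] [Module ℝ V₂]
    (ρ₁ : Representation ℝ G U₁) (ψ₁ : Representation ℝ G V₁)
    (ρ₂ : Representation ℝ G U₂) (ψ₂ : Representation ℝ G V₂)
    (eU : U₁ ≃ₗ[ℝ] U₂) (eV : V₁ ≃ₗ[ℝ] V₂)
    (hU : ∀ g u, eU (ρ₁ g u) = ρ₂ g (eU u)) (hV : ∀ g v, eV (ψ₁ g v) = ψ₂ g (eV v)) :
    repHom ρ₁ ψ₁ ≃ₗ[ℝ] repHom ρ₂ ψ₂ := by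
  have hU' : ∀ g u, eU.symm (ρ₂ g u) = ρ₁ g (eU.symm u) := fun g u => by
    apply eU.injective; rw [eU.apply_symm_apply, hU, eU.apply_symm_apply]
  have hV' : ∀ g v, eV.symm (ψ₂ g v) = ψ₁ g (eV.symm v) := fun g v => by
    apply eV.injective; rw [eV.apply_symm_apply, hV, eV.apply_symm_apply]
  exact
  { toFun := fun f => ⟨(eV : V₁ →ₗ[ℝ] V₂) ∘ₗ f.1 ∘ₗ (eU.symm : U₂ →ₗ[ℝ] U₁), by
      intro g u
      simp only [LinearMap.comp_apply, LinearEquiv.coe_coe]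
      rw [hU', f.2 g, hV]⟩
    invFun := fun f => ⟨(eV.symm : V₂ →ₗ[ℝ] V₁) ∘ₗ f.1 ∘ₗ (eU : U₁ →ₗ[ℝ] U₂), by
      intro g u
      simp only [LinearMap.comp_apply, LinearEquiv.coe_coe]
      rw [hU, f.2 g, hV']⟩
    map_add' := by intro f g; apply Subtype.ext; ext u; simp
    map_smul' := by intro c f; apply Subtype.ext; ext u; simp
    left_inv := by intro f; apply Subtype.ext; ext u; simp
    right_inv := by intro f; apply Subtype.ext; ext u; simp }

/-- Auxiliary map for Frobenius reciprocity. -/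
noncomputable def frobInvAux {K : Type*} [Group K] (H : Subgroup K)
    {U : Type*} [AddCommGroup U] [Module ℝ U] (ρ : Representation ℝ H U)
    {W : Type*} [AddCommGroup W] [Module ℝ W] (ψ : Representation ℝ K W)
    (φ : repHom (resRep H ψ) ρ) : W →ₗ[ℝ] indSubmodule H ρ where
  toFun w := ⟨fun k => φ.1 (ψ k w), by
    intro h k
    have hmul : ψ ((h : K) * k) = ψ (h : K) * ψ k := map_mul ψ _ _
    simp only [hmul, Module.End.mul_apply]
    exact φ.2 h (ψ k w)⟩
  map_add' w w' := Subtype.ext (funext fun k => by simp)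
  map_smul' c w := Subtype.ext (funext fun k => by simp)

/-- Frobenius reciprocity: `Hom_K(W, Ind_H^K U) ≃ Hom_H(Res W, U)`. -/
noncomputable def frobRecipEquiv {K : Type*} [Group K] (H : Subgroup K)
    {U : Type*} [AddCommGroup U] [Module ℝ U] (ρ : Representation ℝ H U)
    {W : Type*} [AddCommGroup W] [Module ℝ W] (ψ : Representation ℝ K W) :
    repHom ψ (indRep H ρ) ≃ₗ[ℝ] repHom (resRep H ψ) ρ where
  toFun F := ⟨(LinearMap.proj (1 : K)).comp ((indSubmodule H ρ).subtype.comp F.1), by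
    intro h w
    have h1 := F.2 (h : K) w
    have h2 : (F.1 w).1 ((h : K) * 1) = ρ h ((F.1 w).1 1) := (F.1 w).2 h 1
    simp only [LinearMap.comp_apply, Submodule.coe_subtype, LinearMap.proj_apply]
    show (F.1 ((resRep H ψ) h w)).1 1 = ρ h ((F.1 w).1 1)
    have : (F.1 ((resRep H ψ) h w)).1 1 = (F.1 w).1 (1 * (h : K)) := by
      rw [show (resRep H ψ) h w = ψ (h : K) w from rfl, h1]; rfl
    rw [this, one_mul, ← mul_one (h : K), h2]⟩
  invFun φ := ⟨frobInvAux H ρ ψ φ, by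
    intro g w
    apply Subtype.ext
    funext k
    show φ.1 (ψ k (ψ g w)) = φ.1 (ψ (k * g) w)
    rw [map_mul ψ, Module.End.mul_apply]⟩
  map_add' F G := Subtype.ext (by ext w; simp)
  map_smul' c F := Subtype.ext (by ext w; simp)
  left_inv F := by
    apply Subtype.ext
    ext w k
    show (F.1 (ψ k w)).1 1 = (F.1 w).1 k
    rw [F.2 k w]
    show (F.1 w).1 (1 * k) = (F.1 w).1 k
    rw [one_mul]
  right_inv φ := by
    apply Subtype.ext
    ext w
    show φ.1 (ψ 1 w) = φ.1 w
    rw [map_one ψ, Module.End.one_apply]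

/-- The algebra of equivariant endomorphisms. -/
def repEndAlg {G W : Type*} [Group G] [AddCommGroup W] [Module ℝ W]
    (ψ : Representation ℝ G W) : Subalgebra ℝ (Module.End ℝ W) where
  carrier := {f | ∀ (g : G) (w : W), f (ψ g w) = ψ g (f w)}
  mul_mem' := by
    intro a b ha hb g w
    simp only [Module.End.mul_apply, hb g w, ha g (b w)]
  add_mem' := by
    intro a b ha hb g w
    simp [ha g w, hb g w]
  algebraMap_mem' := by
    intro r g w
    simp [Module.algebraMap_end_apply]

theorem repHomCongr_finrank {G U₁ V₁ U₂ V₂ : Type*} [Group G]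
    [AddCommGroup U₁] [Module ℝ U₁] [AddCommGroup V₁] [Module ℝ V₁]
    [AddCommGroup U₂] [Module ℝ U₂] [AddCommGroup V₂] [Module ℝ V₂]
    (ρ₁ : Representation ℝ G U₁) (ψ₁ : Representation ℝ G V₁)
    (ρ₂ : Representation ℝ G U₂) (ψ₂ : Representation ℝ G V₂)
    (eU : U₁ ≃ₗ[ℝ] U₂) (eV : V₁ ≃ₗ[ℝ] V₂)
    (hU : ∀ g u, eU (ρ₁ g u) = ρ₂ g (eU u)) (hV : ∀ g v, eV (ψ₁ g v) = ψ₂ g (eV v)) :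
    dimRepHom ρ₁ ψ₁ = dimRepHom ρ₂ ψ₂ :=
  LinearEquiv.finrank_eq (repHomCongr ρ₁ ψ₁ ρ₂ ψ₂ eU eV hU hV)

theorem frobRecip_finrank {K : Type*} [Group K] (H : Subgroup K)
    {U : Type*} [AddCommGroup U] [Module ℝ U] (ρ : Representation ℝ H U)
    {W : Type*} [AddCommGroup W] [Module ℝ W] (ψ : Representation ℝ K W) :
    dimRepHom ψ (indRep H ρ) = dimRepHom (resRep H ψ) ρ := by
  letI : AddCommGroup ↥(repHom ψ (indRep H ρ)) := Submodule.addCommGroup (repHom ψ (indRep H ρ))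
  exact LinearEquiv.finrank_eq (frobRecipEquiv H ρ ψ)

end Aux

set_option maxHeartbeats 2000000 in
set_option synthInstance.maxHeartbeats 400000 in
/-- Let `H` be an index-two normal subgroup of a finite group `K`, and `U`
an irreducible real `H`-module with `K`-invariant character.  If `W` is a real `K`-module
whose restriction to `H` is isomorphic to `U` (a `K`-extension of `U`), then `W` is
irreducible, and `m(W) · d(W) = d(U)`, where
`m(W) = dim_ℝ Hom_K(W, Ind_H^K U) / d(W)` is the multiplicity of `W` in `Ind_H^K U`
(the division being exact), `d(W) = dim_ℝ Hom_K(W, W)` and `d(U) = dim_ℝ Hom_H(U, U)`. -/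
theorem multiplicity_mul_dW_eq_dU {K : Type} [Group K] [Finite K] (H : Subgroup K)
    [H.Normal] (hidx : H.index = 2) {U : Type} [AddCommGroup U] [Module ℝ U]
    [FiniteDimensional ℝ U] (ρ : Representation ℝ H U) (hirr : IsIrreducibleRep ρ)
    (hinv : charConjInvariant H ρ) {W : Type} [AddCommGroup W] [Module ℝ W]
    [FiniteDimensional ℝ W] (ψ : Representation ℝ K W)
    (hext : RepIso (resRep H ψ) ρ) :
    IsIrreducibleRep ψ ∧
      dimRepHom ψ ψ ∣ dimRepHom ψ (indRep H ρ) ∧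
      (dimRepHom ψ (indRep H ρ) / dimRepHom ψ ψ) * dimRepHom ψ ψ =
        dimRepHom ρ ρ := by
  obtain ⟨e, he⟩ := hext
  -- Part 1: irreducibility of `ψ`
  have hW : IsIrreducibleRep ψ := by
    constructor
    · obtain ⟨u, hu⟩ := hirr.1
      exact ⟨e.symm u, fun h0 => hu (by rw [← e.apply_symm_apply u, h0, map_zero])⟩
    · intro p hp
      have hq : ∀ (h : H) (u : U), u ∈ p.map (e : W →ₗ[ℝ] U) →
          ρ h u ∈ p.map (e : W →ₗ[ℝ] U) := by
        intro h u hu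
        obtain ⟨w, hw, rfl⟩ := hu
        exact Submodule.mem_map.2 ⟨ψ (h : K) w, hp (h : K) w hw, he h w⟩
      rcases hirr.2 _ hq with h0 | h0
      · left
        rw [eq_bot_iff]
        intro w hw
        have hmem : e w ∈ p.map (e : W →ₗ[ℝ] U) := Submodule.mem_map.2 ⟨w, hw, rfl⟩
        rw [h0, Submodule.mem_bot] at hmem
        have : w = 0 := by
          apply e.injective
          rw [hmem, map_zero]
        simp [this]
      · right
        rw [eq_top_iff]
        intro w _
        have hmem : e w ∈ p.map (e : W →ₗ[ℝ] U) := by rw [h0]; trivial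
        obtain ⟨x, hx, hxe⟩ := Submodule.mem_map.1 hmem
        rwa [← e.injective hxe]
  -- Part 2: Frobenius reciprocity
  have hfrob : dimRepHom ψ (indRep H ρ) = dimRepHom ρ ρ :=
    (frobRecip_finrank H ρ ψ).trans
      (repHomCongr_finrank (resRep H ψ) ρ ρ ρ e (LinearEquiv.refl ℝ U) he (fun g u => rfl))
  -- Part 3: divisibility via the division algebra of equivariant endomorphisms
  set A := repEndAlg ψ with hAdef
  set B := repEndAlg (resRep H ψ) with hBdef
  have hAB : A ≤ B := fun f hf h w => hf (h : K) w
  have hA : dimRepHom ψ ψ = Module.finrank ℝ A :=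
    LinearEquiv.finrank_eq (LinearEquiv.ofEq _ (Subalgebra.toSubmodule A) rfl)
  have hB : Module.finrank ℝ B = dimRepHom ρ ρ :=
    LinearEquiv.finrank_eq
      ((LinearEquiv.ofEq (Subalgebra.toSubmodule B) (repHom (resRep H ψ) (resRep H ψ)) rfl).trans
        (repHomCongr (resRep H ψ) (resRep H ψ) ρ ρ e e he he))
  letI : Nontrivial ↥A := by
    obtain ⟨w, hw⟩ := hW.1
    refine ⟨1, 0, fun h01 => hw ?_⟩
    have := congrArg (fun f : ↥A => (f : Module.End ℝ W) w) h01
    simpa using this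
  have hunit : ∀ a : ↥A, IsUnit a ∨ a = 0 := by
    intro a
    by_cases ha : a = 0
    · right; exact ha
    left
    have haf : (a : Module.End ℝ W) ≠ 0 := fun h => ha (Subtype.ext h)
    have hker : LinearMap.ker (a : Module.End ℝ W) = ⊥ := by
      rcases hW.2 (LinearMap.ker (a : Module.End ℝ W)) (fun g w hw => by
        rw [LinearMap.mem_ker] at hw ⊢
        rw [a.2 g w, hw, map_zero]) with h | h
      · exact h
      · exact absurd (LinearMap.ker_eq_top.1 h) haf
    have hrange : LinearMap.range (a : Module.End ℝ W) = ⊤ := by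
      rcases hW.2 (LinearMap.range (a : Module.End ℝ W)) (fun g w hw => by
        obtain ⟨x, rfl⟩ := hw
        exact ⟨ψ g x, (a.2 g x)⟩) with h | h
      · exact absurd (LinearMap.range_eq_bot.1 h) haf
      · exact h
    have hbij : Function.Bijective (a : Module.End ℝ W) :=
      ⟨LinearMap.ker_eq_bot.1 hker, LinearMap.range_eq_top.1 hrange⟩
    set E := LinearEquiv.ofBijective (a : Module.End ℝ W) hbij with hEdef
    have hmem : (E.symm : W →ₗ[ℝ] W) ∈ A := by
      intro g w
      conv_lhs => rw [← E.apply_symm_apply w]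
      show E.symm (ψ g ((a : Module.End ℝ W) (E.symm w))) = ψ g (E.symm w)
      rw [← a.2 g (E.symm w)]
      exact E.symm_apply_apply _
    refine isUnit_iff_exists.2 ⟨⟨(E.symm : W →ₗ[ℝ] W), hmem⟩, ?_, ?_⟩
    · apply Subtype.ext; ext w; exact E.apply_symm_apply w
    · apply Subtype.ext; ext w; exact E.symm_apply_apply w
  letI : DivisionRing ↥A := DivisionRing.ofIsUnitOrEqZero hunit
  letI : Module ↥A ↥B := Module.compHom ↥B (Subalgebra.inclusion hAB).toRingHom
  letI : IsScalarTower ℝ ↥A ↥B := ⟨fun r a b => by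
    show ((Subalgebra.inclusion hAB) (r • a)) * b = r • (((Subalgebra.inclusion hAB) a) * b)
    rw [map_smul, smul_mul_assoc]⟩
  have htower : Module.finrank ℝ ↥A * Module.finrank ↥A ↥B = Module.finrank ℝ ↥B :=
    Module.finrank_mul_finrank ℝ ↥A ↥B
  have hdvd : dimRepHom ψ ψ ∣ dimRepHom ρ ρ := by
    rw [hA, ← hB]
    exact ⟨Module.finrank ↥A ↥B, htower.symm⟩
  refine ⟨hW, ?_, ?_⟩
  · rw [hfrob]; exact hdvd
  · rw [hfrob, Nat.div_mul_cancel hdvd]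
end

section
/- Let H be an index-two normal subgroup of a finite group K and let U be an irreducible real H-module of real type (i.e. End_H(U) ≅ R) whose character is K-invariant. If U admits a K-extension, then there are exactly two isomorphism classes of K-extensions of U, and both are of real type. -/
open Module

section AuxLemmas

variable {K : Type*} [Group K] (H : Subgroup K)

/-- In an index-two subgroup, the product of two non-members is a member. -/
lemma Aux.mul_mem_of_not_mem [H.Normal] (hidx : H.index = 2)
    {g g' : K} (hg : g ∉ H) (hg' : g' ∉ H) : g * g' ∈ H := by
  classical
  have hcard : Nat.card (K ⧸ H) = 2 := hidx
  set a : K ⧸ H := (g : K ⧸ H) with ha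
  set b : K ⧸ H := (g' : K ⧸ H) with hb
  have ha1 : a ≠ 1 := fun h => hg ((QuotientGroup.eq_one_iff g).mp h)
  have hb1 : b ≠ 1 := fun h => hg' ((QuotientGroup.eq_one_iff g').mp h)
  have hfin : Finite (K ⧸ H) := Nat.finite_of_card_ne_zero (by omega)
  have hF : Fintype (K ⧸ H) := Fintype.ofFinite _
  have hcardF : Fintype.card (K ⧸ H) = 2 := by
    rw [← Nat.card_eq_fintype_card, hcard]
  have hab : a = b := by
    by_contra hne
    have h1 : ({1, a, b} : Finset (K ⧸ H)).card = 3 := by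
      rw [Finset.card_insert_of_notMem (by simp [Ne.symm ha1, Ne.symm hb1]),
        Finset.card_insert_of_notMem (by simp [hne]), Finset.card_singleton]
    have h2 : ({1, a, b} : Finset (K ⧸ H)).card ≤ 2 :=
      (Finset.card_le_univ _).trans_eq hcardF
    omega
  have hsq : a * a = 1 := by
    have := pow_card_eq_one' (G := K ⧸ H) (x := a)
    rwa [hcard, sq] at this
  have : ((g * g' : K) : K ⧸ H) = 1 := by
    show a * b = 1
    rw [← hab]; exact hsq
  exact (QuotientGroup.eq_one_iff _).mp this

/-- In an index-two subgroup, squares are members. -/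
lemma Aux.sq_mem [H.Normal] (hidx : H.index = 2) (g : K) : g * g ∈ H := by
  by_cases h : g ∈ H
  · exact mul_mem h h
  · exact Aux.mul_mem_of_not_mem H hidx h h

lemma Aux.exists_not_mem (hidx : H.index = 2) : ∃ g : K, g ∉ H := by
  by_contra h
  push_neg at h
  have : H = ⊤ := Subgroup.eq_top_iff' H |>.mpr h
  rw [← Subgroup.index_eq_one] at this
  omega

end AuxLemmas

section Aux2

open Classical in
/-- The sign character of an index-two subgroup. -/
noncomputable def Aux.eps {K : Type*} [Group K] (H : Subgroup K) (g : K) : ℝ :=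
  if g ∈ H then 1 else -1

lemma Aux.eps_one {K : Type*} [Group K] (H : Subgroup K) : Aux.eps H 1 = 1 := by
  simp [Aux.eps, H.one_mem]

lemma Aux.eps_mem {K : Type*} [Group K] (H : Subgroup K) {g : K} (hg : g ∈ H) :
    Aux.eps H g = 1 := by simp [Aux.eps, hg]

lemma Aux.eps_not_mem {K : Type*} [Group K] (H : Subgroup K) {g : K} (hg : g ∉ H) :
    Aux.eps H g = -1 := by simp [Aux.eps, hg]

lemma Aux.eps_mul {K : Type*} [Group K] (H : Subgroup K) [H.Normal] (hidx : H.index = 2)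
    (g g' : K) : Aux.eps H (g * g') = Aux.eps H g * Aux.eps H g' := by
  by_cases hg : g ∈ H <;> by_cases hg' : g' ∈ H
  · rw [Aux.eps_mem H hg, Aux.eps_mem H hg', Aux.eps_mem H (mul_mem hg hg')]; ring
  · have : g * g' ∉ H := fun h => hg' (by
      have := mul_mem (inv_mem hg) h; rwa [inv_mul_cancel_left] at this)
    rw [Aux.eps_mem H hg, Aux.eps_not_mem H hg', Aux.eps_not_mem H this]; ring
  · have : g * g' ∉ H := fun h => hg (by
      have := mul_mem h (inv_mem hg'); rwa [mul_inv_cancel_right] at this)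
    rw [Aux.eps_not_mem H hg, Aux.eps_mem H hg', Aux.eps_not_mem H this]; ring
  · rw [Aux.eps_not_mem H hg, Aux.eps_not_mem H hg',
      Aux.eps_mem H (Aux.mul_mem_of_not_mem H hidx hg hg')]; ring

/-- Conjugating a representation by a linear equivalence. -/
def Aux.conjRep {G U V : Type*} [Group G] [AddCommGroup U] [Module ℝ U] [AddCommGroup V]
    [Module ℝ V] (σ : Representation ℝ G U) (e : U ≃ₗ[ℝ] V) : Representation ℝ G V where
  toFun g := e.toLinearMap ∘ₗ σ g ∘ₗ e.symm.toLinearMap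
  map_one' := by ext v; simp
  map_mul' g g' := by ext v; simp [Module.End.mul_apply]

lemma Aux.conjRep_apply {G U V : Type*} [Group G] [AddCommGroup U] [Module ℝ U]
    [AddCommGroup V] [Module ℝ V] (σ : Representation ℝ G U) (e : U ≃ₗ[ℝ] V) (g : G) (v : V) :
    Aux.conjRep σ e g v = e (σ g (e.symm v)) := rfl

/-- Twisting a representation by the sign character. -/
noncomputable def Aux.signRep {K U : Type*} [Group K] [AddCommGroup U] [Module ℝ U]
    (H : Subgroup K) [H.Normal] (hidx : H.index = 2) (σ : Representation ℝ K U) :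
    Representation ℝ K U where
  toFun g := Aux.eps H g • σ g
  map_one' := by
    show Aux.eps H 1 • σ 1 = 1
    rw [Aux.eps_one, map_one, one_smul]
  map_mul' g g' := by
    show Aux.eps H (g * g') • σ (g * g') =
      (Aux.eps H g • σ g) * (Aux.eps H g' • σ g')
    rw [Aux.eps_mul H hidx, map_mul, mul_smul, smul_mul_assoc, mul_smul_comm]

lemma Aux.signRep_apply {K U : Type*} [Group K] [AddCommGroup U] [Module ℝ U]
    (H : Subgroup K) [H.Normal] (hidx : H.index = 2) (σ : Representation ℝ K U) (g : K) :
    Aux.signRep H hidx σ g = Aux.eps H g • σ g := rfl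

end Aux2

section Core

variable {K : Type} [Group K] {U : Type} [AddCommGroup U] [Module ℝ U]
  [FiniteDimensional ℝ U]

/-- Schur: an equivariant endomorphism is scalar when `dimRepHom ρ ρ = 1`. -/
lemma Aux.exists_scalar {G : Type*} [Group G] (ρ : Representation ℝ G U)
    (hreal : dimRepHom ρ ρ = 1) {u0 : U} (hu0 : u0 ≠ 0) (f : U →ₗ[ℝ] U)
    (hf : ∀ (g : G) (u : U), f (ρ g u) = ρ g (f u)) : ∃ c : ℝ, f = c • LinearMap.id := by
  have hid : (LinearMap.id : U →ₗ[ℝ] U) ∈ repHom ρ ρ := fun g u => rfl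
  set x : repHom ρ ρ := ⟨LinearMap.id, hid⟩ with hx
  have hxne : x ≠ 0 := by
    intro h
    apply hu0
    have := congrArg (fun y : repHom ρ ρ => (y : U →ₗ[ℝ] U) u0) h
    simpa [hx] using this
  have hspan : Submodule.span ℝ {x} = ⊤ :=
    (finrank_eq_one_iff_of_nonzero x hxne).mp hreal
  have hmem : (⟨f, hf⟩ : repHom ρ ρ) ∈ Submodule.span ℝ {x} := hspan ▸ Submodule.mem_top
  obtain ⟨c, hc⟩ := Submodule.mem_span_singleton.mp hmem
  refine ⟨c, ?_⟩
  have := congrArg (fun y : repHom ρ ρ => (y : U →ₗ[ℝ] U)) hc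
  simpa [hx] using this.symm

/-- Classification: any extension of `ρ` on the same space equals `σ` or its sign twist. -/
lemma Aux.classify (H : Subgroup K) [H.Normal] (hidx : H.index = 2)
    (ρ : Representation ℝ H U) (hreal : dimRepHom ρ ρ = 1) {u0 : U} (hu0 : u0 ≠ 0)
    {g₀ : K} (hg₀ : g₀ ∉ H) (σ ψ : Representation ℝ K U)
    (hσ : ∀ h : H, σ (h : K) = ρ h) (hψ : ∀ h : H, ψ (h : K) = ρ h) :
    (∀ g, ψ g = σ g) ∨ (∀ g, ψ g = Aux.eps H g • σ g) := by
  set f : U →ₗ[ℝ] U := ψ g₀ ∘ₗ σ g₀⁻¹ with hfdef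
  have hfequiv : ∀ (h : H) (u : U), f (ρ h u) = ρ h (f u) := by
    intro h u
    have hmem : g₀⁻¹ * (h : K) * g₀ ∈ H := Subgroup.Normal.conj_mem' ‹H.Normal› _ h.2 g₀
    set h' : H := ⟨g₀⁻¹ * (h : K) * g₀, hmem⟩ with hh'
    have e1 : σ g₀⁻¹ (ρ h u) = ρ h' (σ g₀⁻¹ u) := by
      rw [← hσ h, ← hσ h']
      have : (σ g₀⁻¹ * σ (h : K)) u = (σ ((h' : K)) * σ g₀⁻¹) u := by
        rw [← map_mul, ← map_mul]
        congr 2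
        show g₀⁻¹ * (h : K) = (g₀⁻¹ * (h : K) * g₀) * g₀⁻¹
        group
      simpa using this
    have e2 : ∀ v, ψ g₀ (ρ h' v) = ρ h (ψ g₀ v) := by
      intro v
      rw [← hψ h', ← hψ h]
      have : (ψ g₀ * ψ ((h' : K))) v = (ψ ((h : K)) * ψ g₀) v := by
        rw [← map_mul, ← map_mul]
        congr 2
        show g₀ * (g₀⁻¹ * (h : K) * g₀) = (h : K) * g₀
        group
      simpa using this
    show ψ g₀ (σ g₀⁻¹ (ρ h u)) = ρ h (ψ g₀ (σ g₀⁻¹ u))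
    rw [e1, e2]
  obtain ⟨c, hc⟩ := Aux.exists_scalar ρ hreal hu0 f hfequiv
  have hψg₀ : ψ g₀ = c • σ g₀ := by
    have h1 : f ∘ₗ σ g₀ = ψ g₀ := by
      ext u
      show ψ g₀ (σ g₀⁻¹ (σ g₀ u)) = ψ g₀ u
      congr 1
      have : (σ g₀⁻¹ * σ g₀) u = u := by
        rw [← map_mul, inv_mul_cancel, map_one]; rfl
      simpa using this
    rw [← h1, hc]
    ext u
    simp
  have hsq : c * c = 1 := by
    have hg2 : g₀ * g₀ ∈ H := Aux.sq_mem H hidx g₀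
    have e3 : ψ (g₀ * g₀) = σ (g₀ * g₀) :=
      (hψ ⟨g₀ * g₀, hg2⟩).trans (hσ ⟨g₀ * g₀, hg2⟩).symm
    have e4 : ψ (g₀ * g₀) = (c * c) • σ (g₀ * g₀) := by
      rw [map_mul, hψg₀, smul_mul_assoc, mul_smul_comm, ← map_mul, smul_smul]
    have e5 : σ (g₀ * g₀) = (c * c) • σ (g₀ * g₀) := e3.symm.trans e4
    set v := σ (g₀ * g₀)⁻¹ u0 with hv
    have e6 : σ (g₀ * g₀) v = u0 := by
      have : (σ (g₀ * g₀) * σ (g₀ * g₀)⁻¹) u0 = u0 := by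
        rw [← map_mul, mul_inv_cancel, map_one]; rfl
      exact this
    have e7 := congrArg (fun m : U →ₗ[ℝ] U => m v) e5
    simp only [LinearMap.smul_apply] at e7
    rw [e6] at e7
    have h7 : (c * c - 1) • u0 = 0 := by rw [sub_smul, one_smul, ← e7, sub_self]
    rcases smul_eq_zero.mp h7 with h | h
    · exact sub_eq_zero.mp h
    · exact absurd h hu0
  have key : ∀ g, g ∉ H → ψ g = c • σ g := by
    intro g hg
    have hmem : g * g₀⁻¹ ∈ H := by
      apply Aux.mul_mem_of_not_mem H hidx hg
      intro hcon
      exact hg₀ (by simpa using inv_mem hcon)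
    set h' : H := ⟨g * g₀⁻¹, hmem⟩ with hh'
    have h1 : ψ g = ψ ((h' : K)) * ψ g₀ := by
      rw [← map_mul]
      congr 1
      show g = (g * g₀⁻¹) * g₀
      group
    have h2 : (h' : K) * g₀ = g := by
      show (g * g₀⁻¹) * g₀ = g
      group
    rw [h1, hψ h', ← hσ h', hψg₀, mul_smul_comm, ← map_mul, h2]
  rcases mul_self_eq_one_iff.mp hsq with hc1 | hc1
  · left
    intro g
    by_cases hgH : g ∈ H
    · exact (hψ ⟨g, hgH⟩).trans (hσ ⟨g, hgH⟩).symm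
    · rw [key g hgH, hc1, one_smul]
  · right
    intro g
    by_cases hgH : g ∈ H
    · rw [Aux.eps_mem H hgH, one_smul]
      exact (hψ ⟨g, hgH⟩).trans (hσ ⟨g, hgH⟩).symm
    · rw [key g hgH, hc1, Aux.eps_not_mem H hgH]

/-- Extensions of a representation with 1-dimensional endomorphism space are of real type. -/
lemma Aux.dim_one (H : Subgroup K) (ρ : Representation ℝ H U) (hreal : dimRepHom ρ ρ = 1)
    {u0 : U} (hu0 : u0 ≠ 0) (σ : Representation ℝ K U) (hσ : ∀ h : H, σ (h : K) = ρ h) :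
    dimRepHom σ σ = 1 := by
  have hidne : (LinearMap.id : U →ₗ[ℝ] U) ≠ 0 := by
    intro h
    apply hu0
    have := congrArg (fun m : U →ₗ[ℝ] U => m u0) h
    simpa using this
  have heq : repHom σ σ = Submodule.span ℝ {(LinearMap.id : U →ₗ[ℝ] U)} := by
    apply le_antisymm
    · intro f hf
      have hf' : ∀ (h : H) (u : U), f (ρ h u) = ρ h (f u) := by
        intro h u
        have := hf (h : K) u
        rwa [hσ h] at this
      obtain ⟨c, hc⟩ := Aux.exists_scalar ρ hreal hu0 f hf'
      rw [Submodule.mem_span_singleton]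
      exact ⟨c, hc.symm⟩
    · rw [Submodule.span_le, Set.singleton_subset_iff]
      exact fun g u => rfl
  unfold dimRepHom
  rw [heq]
  exact finrank_span_singleton hidne

end Core

/-- Let `H` be an index-two normal subgroup of a finite group `K` and `U`
an irreducible real `H`-module of real type (`d(U) = 1`) with `K`-invariant character.
If `U` admits a `K`-extension, then there are exactly two isomorphism classes of
`K`-extensions of `U`, and both are of real type. -/
theorem two_extensions_of_real_type {K : Type} [Group K] [Finite K] (H : Subgroup K)
    [H.Normal] (hidx : H.index = 2) {U : Type} [AddCommGroup U] [Module ℝ U]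
    [FiniteDimensional ℝ U] (ρ : Representation ℝ H U) (hirr : IsIrreducibleRep ρ)
    (hreal : dimRepHom ρ ρ = 1) (hinv : charConjInvariant H ρ)
    (hext : ∃ σ : Representation ℝ K U, RepIso (resRep H σ) ρ) :
    ∃ σ₁ σ₂ : Representation ℝ K U,
      RepIso (resRep H σ₁) ρ ∧ RepIso (resRep H σ₂) ρ ∧ ¬ RepIso σ₁ σ₂ ∧
      dimRepHom σ₁ σ₁ = 1 ∧ dimRepHom σ₂ σ₂ = 1 ∧
      ∀ (W : Type) [AddCommGroup W] [Module ℝ W] (ψ : Representation ℝ K W),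
        RepIso (resRep H ψ) ρ → (RepIso ψ σ₁ ∨ RepIso ψ σ₂) := by
  obtain ⟨u0, hu0⟩ := hirr.1
  obtain ⟨g₀, hg₀⟩ := Aux.exists_not_mem H hidx
  obtain ⟨σ, e, he⟩ := hext
  set σ₁ : Representation ℝ K U := Aux.conjRep σ e with hσ₁def
  have hσ₁ : ∀ h : H, σ₁ (h : K) = ρ h := by
    intro h
    ext u
    show e (σ (h : K) (e.symm u)) = ρ h u
    have := he h (e.symm u)
    simpa [resRep] using this
  set σ₂ := Aux.signRep H hidx σ₁ with hσ₂def
  have hσ₂ : ∀ h : H, σ₂ (h : K) = ρ h := by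
    intro h
    rw [hσ₂def, Aux.signRep_apply, Aux.eps_mem H h.2, one_smul, hσ₁]
  have hinv1 : ∀ (g : K) (u : U), u ≠ 0 → σ₁ g u ≠ 0 := by
    intro g u hne hz
    apply hne
    have h1 : (σ₁ g⁻¹ * σ₁ g) u = u := by
      rw [← map_mul, inv_mul_cancel, map_one]; rfl
    calc u = σ₁ g⁻¹ (σ₁ g u) := h1.symm
    _ = 0 := by rw [hz, map_zero]
  refine ⟨σ₁, σ₂, ?_, ?_, ?_, ?_, ?_, ?_⟩
  · refine ⟨LinearEquiv.refl ℝ U, fun h u => ?_⟩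
    show σ₁ (h : K) u = ρ h u
    rw [hσ₁ h]
  · refine ⟨LinearEquiv.refl ℝ U, fun h u => ?_⟩
    show σ₂ (h : K) u = ρ h u
    rw [hσ₂ h]
  · rintro ⟨e', he'⟩
    have hequiv : ∀ (h : H) (u : U), e'.toLinearMap (ρ h u) = ρ h (e'.toLinearMap u) := by
      intro h u
      have := he' (h : K) u
      rw [hσ₁ h, hσ₂ h] at this
      exact this
    obtain ⟨c, hc⟩ := Aux.exists_scalar ρ hreal hu0 e'.toLinearMap hequiv
    have hce : ∀ u : U, e' u = c • u := by
      intro u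
      have : e'.toLinearMap u = (c • (LinearMap.id : U →ₗ[ℝ] U)) u := by rw [hc]
      simpa using this
    have hcne : c ≠ 0 := by
      intro h0
      apply hu0
      apply e'.injective
      rw [hce u0, h0, map_zero, zero_smul]
    have h1 := he' g₀ u0
    rw [hce (σ₁ g₀ u0), hσ₂def, Aux.signRep_apply, Aux.eps_not_mem H hg₀] at h1
    have h2 : ((-1 : ℝ) • σ₁ g₀) (e' u0) = -(c • σ₁ g₀ u0) := by
      rw [LinearMap.smul_apply, hce u0, map_smul, neg_one_smul]
    rw [h2] at h1
    have h5 : (2 * c) • (σ₁ g₀ u0) = 0 := by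
      rw [two_mul, add_smul]
      exact eq_neg_iff_add_eq_zero.mp h1
    rcases smul_eq_zero.mp h5 with h | h
    · exact hcne (by linarith)
    · exact hinv1 g₀ u0 hu0 h
  · exact Aux.dim_one H ρ hreal hu0 σ₁ hσ₁
  · exact Aux.dim_one H ρ hreal hu0 σ₂ hσ₂
  · intro W _ _ ψ hψiso
    obtain ⟨f, hf⟩ := hψiso
    set ψ' := Aux.conjRep ψ f with hψ'def
    have hψ' : ∀ h : H, ψ' (h : K) = ρ h := by
      intro h
      ext u
      show f (ψ (h : K) (f.symm u)) = ρ h u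
      have := hf h (f.symm u)
      simpa [resRep] using this
    have hiso : ∀ (g : K) (w : W), f (ψ g w) = ψ' g (f w) := by
      intro g w
      show f (ψ g w) = f (ψ g (f.symm (f w)))
      rw [f.symm_apply_apply]
    rcases Aux.classify H hidx ρ hreal hu0 hg₀ σ₁ ψ' hσ₁ hψ' with h | h
    · left
      exact ⟨f, fun g w => by rw [hiso g w, h g]⟩
    · right
      exact ⟨f, fun g w => by
        rw [hiso g w, h g, hσ₂def, Aux.signRep_apply]⟩
end

section
/- Let H be an index-two normal subgroup of a finite group K and let U be an irreducible real H-module with K-invariant character. If U admits no K-extension, then U is not of quaternionic type, the induced module Ind_H^K U is irreducible, and Ind_H^K U is of complex type if U is of real type, and of quaternionic type if U is of complex type. -/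
open Module

section Frob

open Module Polynomial

lemma exists_sq_neg_one {A : Type} [Ring A] [Algebra ℝ A] [FiniteDimensional ℝ A] [IsDomain A]
    {y : A} (hy : y ∉ Set.range (algebraMap ℝ A)) :
    ∃ (j : A) (c d : ℝ), c ≠ 0 ∧ j = c • y + d • (1 : A) ∧ j * j = -1 := by
  have hint : IsIntegral ℝ y := IsIntegral.of_finite ℝ y
  have hirr : Irreducible (minpoly ℝ y) := minpoly.irreducible hint
  have hmon : (minpoly ℝ y).Monic := minpoly.monic hint
  have hdeg2 : (minpoly ℝ y).natDegree ≤ 2 := hirr.natDegree_le_two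
  have hdeg1 : 1 ≤ (minpoly ℝ y).natDegree := minpoly.natDegree_pos hint
  have hne1 : (minpoly ℝ y).natDegree ≠ 1 := by
    intro h1
    have heq := hmon.eq_X_add_C h1
    have := minpoly.aeval ℝ y
    rw [heq] at this
    simp only [map_add, aeval_X, aeval_C] at this
    exact hy ⟨-((minpoly ℝ y).coeff 0), by rw [map_neg]; exact neg_eq_of_add_eq_zero_left this⟩
  have hdeg : (minpoly ℝ y).natDegree = 2 := by omega
  set p : ℝ := (minpoly ℝ y).coeff 1 with hp
  set q : ℝ := (minpoly ℝ y).coeff 0 with hq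
  have hc2 : (minpoly ℝ y).coeff 2 = 1 := by
    have := hmon.coeff_natDegree
    rwa [hdeg] at this
  -- the algebraic relation satisfied by y
  have haev : q • (1 : A) + p • y + y ^ 2 = 0 := by
    have h0 := minpoly.aeval ℝ y
    rw [aeval_eq_sum_range, hdeg] at h0
    rw [Finset.sum_range_succ, Finset.sum_range_succ, Finset.sum_range_succ] at h0
    simpa [hc2, Algebra.smul_def] using h0
  -- no real roots
  have hnoroot : ∀ r : ℝ, q + p * r + r ^ 2 ≠ 0 := by
    intro r hr
    have hroot : (minpoly ℝ y).eval r = 0 := by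
      rw [eval_eq_sum_range, hdeg]
      rw [Finset.sum_range_succ, Finset.sum_range_succ, Finset.sum_range_succ]
      simpa [hc2] using hr
    have hdvd : X - C r ∣ minpoly ℝ y := dvd_iff_isRoot.2 hroot
    obtain ⟨g, hg⟩ := hdvd
    rcases hirr.2 hg with h | h
    · exact (Polynomial.not_isUnit_X_sub_C r) h
    · have hgne : g ≠ 0 := by
        rintro rfl
        rw [mul_zero] at hg
        exact (minpoly.ne_zero hint) hg
      have h2 := natDegree_mul (X_sub_C_ne_zero r) hgne
      rw [← hg, natDegree_X_sub_C, natDegree_eq_zero_of_isUnit h, hdeg] at h2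
      omega
  -- negative discriminant
  have ht : 0 < q - p * p / 4 := by
    by_contra hle
    push_neg at hle
    have hD : 0 ≤ p * p / 4 - q := by linarith
    have hs := Real.sq_sqrt hD
    exact hnoroot (-(p / 2) + Real.sqrt (p * p / 4 - q)) (by nlinarith [hs])
  set t : ℝ := q - p * p / 4 with htdef
  set c : ℝ := 1 / Real.sqrt t with hcdef
  have hst : Real.sqrt t > 0 := Real.sqrt_pos.2 ht
  have hcne : c ≠ 0 := by positivity
  have hcc : c * c * t = 1 := by
    rw [hcdef]
    rw [div_mul_div_comm, one_mul]
    rw [Real.mul_self_sqrt ht.le]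
    field_simp
  set e : ℝ := c * (p / 2) with hedef
  have hy2 : y ^ 2 = -p • y + -q • (1 : A) := by
    have h := eq_neg_of_add_eq_zero_right haev
    rw [h]
    simp only [neg_add, neg_smul]
    abel
  have expand : (c • y + e • (1 : A)) * (c • y + e • (1 : A)) =
      (c * c) • (y ^ 2) + ((c * e + e * c)) • y + (e * e) • (1 : A) := by
    simp only [add_mul, mul_add, smul_mul_assoc, mul_smul_comm, one_mul, mul_one, smul_smul,
      pow_two]
    abel_nf
    module
  refine ⟨c • y + e • (1 : A), c, e, hcne, rfl, ?_⟩
  rw [expand, hy2]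
  have hcc2 : c * c * (q - p * p / 4) = 1 := by rw [← htdef]; exact hcc
  have hone : (-1 : A) = (-1 : ℝ) • (1 : A) := by simp
  rw [hone]
  match_scalars
  · rw [hedef]; ring
  · rw [hedef]; linear_combination -hcc2

lemma finrank_le_four_of_units {A : Type} [Ring A] [Algebra ℝ A] [FiniteDimensional ℝ A]
    (hu : ∀ x : A, x ≠ 0 → IsUnit x) : finrank ℝ A ≤ 4 := by
  rcases subsingleton_or_nontrivial A with hs | hnt
  · have : finrank ℝ A = 0 := by
      have : Subsingleton A := hs
      exact Module.finrank_zero_of_subsingleton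
    omega
  have hnzd : NoZeroDivisors A := by
    constructor
    intro a b hab
    by_contra hcon
    push_neg at hcon
    obtain ⟨ha, hb⟩ := hcon
    apply hb
    have h1 : (↑(hu a ha).unit⁻¹ : A) * (a * b) = b := by
      rw [← mul_assoc, IsUnit.val_inv_mul, one_mul]
    rw [hab, mul_zero] at h1
    exact h1.symm
  have hdom : IsDomain A := NoZeroDivisors.to_isDomain A
  by_cases hall : ∀ x : A, x ∈ Set.range (algebraMap ℝ A)
  · have : finrank ℝ A ≤ 1 := by
      apply finrank_le_one (1 : A)
      intro w
      obtain ⟨r, hr⟩ := hall w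
      exact ⟨r, by rw [← hr, Algebra.algebraMap_eq_smul_one]⟩
    omega
  push_neg at hall
  obtain ⟨x, hx⟩ := hall
  obtain ⟨i, cx, dx, hcx, hidef, hi2⟩ := exists_sq_neg_one hx
  have hine : i ≠ 0 := by
    intro h
    rw [h, mul_zero] at hi2
    exact one_ne_zero (neg_eq_zero.1 hi2.symm)
  -- the two eigenspaces of conjugation by i
  set Ap : Submodule ℝ A :=
    { carrier := {y | i * y = y * i}
      add_mem' := fun {a b} ha hb => by simp only [Set.mem_setOf_eq] at *; rw [mul_add, add_mul, ha, hb]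
      zero_mem' := by simp
      smul_mem' := fun c {a} ha => by simp only [Set.mem_setOf_eq] at *; rw [mul_smul_comm, smul_mul_assoc, ha] } with hApdef
  set Am : Submodule ℝ A :=
    { carrier := {y | i * y = -(y * i)}
      add_mem' := fun {a b} ha hb => by
        simp only [Set.mem_setOf_eq] at *; rw [mul_add, add_mul, ha, hb, neg_add]
      zero_mem' := by simp
      smul_mem' := fun c {a} ha => by
        simp only [Set.mem_setOf_eq] at *
        rw [mul_smul_comm, smul_mul_assoc, ha, smul_neg] } with hAmdef
  have hmemAp : ∀ y : A, y ∈ Ap ↔ i * y = y * i := fun y => Iff.rfl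
  have hmemAm : ∀ y : A, y ∈ Am ↔ i * y = -(y * i) := fun y => Iff.rfl
  -- the sup is everything
  have hsup : Ap ⊔ Am = ⊤ := by
    rw [eq_top_iff]
    intro y _
    have hdecomp : y = ((1:ℝ)/2) • (y - i*y*i) + ((1:ℝ)/2) • (y + i*y*i) := by
      rw [← smul_add]
      have : y - i*y*i + (y + i*y*i) = (2:ℝ) • y := by
        rw [two_smul]; abel
      rw [this, smul_smul]
      norm_num
    rw [hdecomp]
    apply Submodule.add_mem
    · apply Submodule.mem_sup_left
      apply Submodule.smul_mem
      rw [hmemAp]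
      rw [mul_sub, sub_mul]
      rw [show i * (i * y * i) = -(y * i) by rw [show i * (i * y * i) = (i*i) * y * i by noncomm_ring, hi2]; noncomm_ring]
      rw [show i * y * i * i = -(i * y) by rw [mul_assoc (i*y) i i, hi2]; noncomm_ring]
      abel
    · apply Submodule.mem_sup_right
      apply Submodule.smul_mem
      rw [hmemAm]
      rw [mul_add, add_mul]
      rw [show i * (i * y * i) = -(y * i) by rw [show i * (i * y * i) = (i*i) * y * i by noncomm_ring, hi2]; noncomm_ring]
      rw [show i * y * i * i = -(i * y) by rw [mul_assoc (i*y) i i, hi2]; noncomm_ring]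
      abel
  -- A⁺ is contained in span {1, i}
  have hApspan : Ap ≤ Submodule.span ℝ ({1, i} : Set A) := by
    intro y hy
    rw [hmemAp] at hy
    by_cases hyr : y ∈ Set.range (algebraMap ℝ A)
    · obtain ⟨r, hr⟩ := hyr
      rw [← hr, Algebra.algebraMap_eq_smul_one]
      exact Submodule.smul_mem _ _ (Submodule.subset_span (Set.mem_insert _ _))
    · obtain ⟨j, c, d, hc, hjdef, hj2⟩ := exists_sq_neg_one hyr
      have hcomm : i * j = j * i := by
        rw [hjdef, mul_add, add_mul, mul_smul_comm, smul_mul_assoc, hy,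
          mul_smul_comm, smul_mul_assoc, one_mul, mul_one]
      have hsq : (i*j) * (i*j) = 1 := by
        have : (i*j) * (i*j) = (i*i) * (j*j) := by
          rw [show (i*j)*(i*j) = i * (j * i) * j by noncomm_ring, ← hcomm]
          noncomm_ring
        rw [this, hi2, hj2]
        norm_num
      have hfac : (i*j - 1) * (i*j + 1) = 0 := by
        have expand : (i*j - 1) * (i*j + 1) = (i*j) * (i*j) + (i*j) - (i*j) - 1 := by noncomm_ring
        rw [expand, hsq]
        abel
      have hji : j = i ∨ j = -i := by
        rcases mul_eq_zero.1 hfac with h | h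
        · right
          have h1 : i * j = 1 := by
            have := sub_eq_zero.1 h; exact this
          have h2 : i * (i * j) = i := by rw [h1, mul_one]
          rw [← mul_assoc, hi2] at h2
          have : -j = i := by rw [← neg_one_mul, h2]
          rw [← this, neg_neg]
        · left
          have h1 : i * j = -1 := by
            have := eq_neg_of_add_eq_zero_left h; exact this
          have h2 : i * (i * j) = i * (-1) := by rw [h1]
          rw [← mul_assoc, hi2] at h2
          simp only [neg_one_mul, mul_neg, mul_one] at h2
          exact neg_injective h2
      have hyspan : y = c⁻¹ • (j - d • 1) := by
        rw [hjdef]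
        rw [add_sub_cancel_right, smul_smul, inv_mul_cancel₀ hc, one_smul]
      rcases hji with h | h
      · rw [hyspan, h]
        apply Submodule.smul_mem
        apply Submodule.sub_mem
        · exact Submodule.subset_span (Set.mem_insert_of_mem _ rfl)
        · exact Submodule.smul_mem _ _ (Submodule.subset_span (Set.mem_insert _ _))
      · rw [hyspan, h]
        apply Submodule.smul_mem
        apply Submodule.sub_mem
        · exact Submodule.neg_mem _ (Submodule.subset_span (Set.mem_insert_of_mem _ rfl))
        · exact Submodule.smul_mem _ _ (Submodule.subset_span (Set.mem_insert _ _))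
  have hApfin : finrank ℝ Ap ≤ 2 := by
    have h1 : finrank ℝ Ap ≤ finrank ℝ (Submodule.span ℝ ({1, i} : Set A)) :=
      Submodule.finrank_mono hApspan
    have h2 : finrank ℝ (Submodule.span ℝ ({1, i} : Set A)) ≤ 2 := by
      classical
      refine le_trans (finrank_span_le_card _) ?_
      rw [Set.toFinset_insert, Set.toFinset_singleton]
      exact le_trans (Finset.card_insert_le _ _) (by simp)
    omega
  have hAmfin : finrank ℝ Am ≤ 2 := by
    by_cases hbm : Am = ⊥
    · rw [hbm, finrank_bot]; omega
    obtain ⟨z, hzm, hz⟩ := Submodule.exists_mem_ne_zero_of_ne_bot hbm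
    rw [hmemAm] at hzm
    set zinv : A := ↑(hu z hz).unit⁻¹ with hzinvdef
    have hzz : z * zinv = 1 := IsUnit.mul_val_inv _
    have hzz' : zinv * z = 1 := IsUnit.val_inv_mul _
    have hzim : i * zinv = -(zinv * i) := by
      have e1 : zinv * (i * z) * zinv = zinv * (-(z * i)) * zinv := by rw [hzm]
      rw [mul_assoc zinv (i*z) zinv, mul_assoc i z zinv, hzz, mul_one] at e1
      rw [mul_neg, neg_mul, ← mul_assoc zinv z i, hzz', one_mul] at e1
      rw [e1, neg_neg]
    have hf : ∀ w : A, w ∈ Am → w * zinv ∈ Ap := by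
      intro w hw
      rw [hmemAm] at hw
      rw [hmemAp]
      calc i * (w * zinv) = (i * w) * zinv := by rw [mul_assoc]
        _ = -(w * i) * zinv := by rw [hw]
        _ = -(w * (i * zinv)) := by rw [neg_mul, mul_assoc]
        _ = -(w * (-(zinv * i))) := by rw [hzim]
        _ = w * (zinv * i) := by rw [mul_neg, neg_neg]
        _ = (w * zinv) * i := by rw [mul_assoc]
    set f : ↥Am →ₗ[ℝ] ↥Ap :=
      { toFun := fun w => ⟨(w : A) * zinv, hf w w.2⟩
        map_add' := by intro a b; ext; simp [add_mul]
        map_smul' := by intro c a; ext; simp [smul_mul_assoc] } with hfdef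
    have hinj : Function.Injective f := by
      intro a b hab
      have h0 : (a : A) * zinv = (b : A) * zinv := congrArg Subtype.val hab
      have hab2 : (a : A) = b := by
        have h3 := congrArg (fun w => w * z) h0
        simpa [mul_assoc, hzz', mul_one] using h3
      exact Subtype.ext hab2
    exact le_trans (LinearMap.finrank_le_finrank_of_injective hinj) hApfin
  have hfinal : finrank ℝ A ≤ finrank ℝ Ap + finrank ℝ Am := by
    have := Submodule.finrank_sup_add_finrank_inf_eq Ap Am
    rw [hsup] at this
    have htop : finrank ℝ (⊤ : Submodule ℝ A) = finrank ℝ A := finrank_top ℝ A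
    omega
  omega

end Frob

section RepTools

variable {G U V : Type} [Group G] [AddCommGroup U] [Module ℝ U] [AddCommGroup V] [Module ℝ V]

lemma rep_inv_apply (α : Representation ℝ G U) (g : G) (u : U) : α g (α g⁻¹ u) = u := by
  have : α g * α g⁻¹ = 1 := by rw [← map_mul, mul_inv_cancel, map_one]
  calc α g (α g⁻¹ u) = (α g * α g⁻¹) u := rfl
    _ = u := by rw [this]; rfl

lemma schur_bijective {α : Representation ℝ G U} {β : Representation ℝ G V}
    (hα : IsIrreducibleRep α) (hβ : IsIrreducibleRep β) {T : U →ₗ[ℝ] V}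
    (hT : T ∈ repHom α β) (hT0 : T ≠ 0) : Function.Bijective T := by
  constructor
  · rw [← LinearMap.ker_eq_bot]
    rcases hα.2 (LinearMap.ker T) (fun g u hu => by
      rw [LinearMap.mem_ker] at *
      rw [hT g u, hu, map_zero]) with h | h
    · exact h
    · exfalso
      apply hT0
      ext u
      have hu : u ∈ LinearMap.ker T := h ▸ Submodule.mem_top
      simpa using hu
  · rw [← LinearMap.range_eq_top]
    rcases hβ.2 (LinearMap.range T) (fun g v hv => by
      obtain ⟨u, rfl⟩ := hv
      exact ⟨α g u, hT g u⟩) with h | h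
    · exfalso
      apply hT0
      ext u
      have hv : T u ∈ LinearMap.range T := LinearMap.mem_range_self T u
      rw [h] at hv
      simpa using hv
    · exact h

lemma repHom_eq_invariants (α : Representation ℝ G U) (β : Representation ℝ G V) :
    repHom α β = (Representation.linHom α β).invariants := by
  ext f
  constructor
  · intro hf g
    ext u
    simp only [Representation.linHom_apply, LinearMap.comp_apply]
    rw [← hf g (α g⁻¹ u), rep_inv_apply]
  · intro hf g u
    have h := congrArg (fun (F : U →ₗ[ℝ] V) => F (α g u)) (hf g)
    simp only [Representation.linHom_apply, LinearMap.comp_apply] at h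
    have h2 : α g⁻¹ (α g u) = u := by
      have : α g⁻¹ * α g = 1 := by rw [← map_mul, inv_mul_cancel, map_one]
      calc α g⁻¹ (α g u) = (α g⁻¹ * α g) u := rfl
        _ = u := by rw [this]; rfl
    rw [h2] at h
    exact h.symm

open Module

lemma finrank_repHom_eq_of_traces_eq [Fintype G] [FiniteDimensional ℝ U] [FiniteDimensional ℝ V]
    (α β : Representation ℝ G U) (γ : Representation ℝ G V)
    (hchar : ∀ g : G, LinearMap.trace ℝ U (α g) = LinearMap.trace ℝ U (β g)) :
    finrank ℝ (repHom α γ) = finrank ℝ (repHom β γ) := by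
  haveI : Invertible ((Fintype.card G : ℝ)) :=
    invertibleOfNonzero (by exact_mod_cast (Fintype.card_ne_zero : Fintype.card G ≠ 0))
  have key : ∀ δ : Representation ℝ G U,
      (⅟(Fintype.card G : ℝ)) • ∑ g : G,
          (LinearMap.trace ℝ U (δ g⁻¹) * LinearMap.trace ℝ V (γ g))
        = (finrank ℝ (Representation.linHom δ γ).invariants : ℝ) := by
    intro δ
    have h := FDRep.average_char_eq_finrank_invariants (FDRep.of (Representation.linHom δ γ))
    have h2 : ∀ g : G, (FDRep.of (Representation.linHom δ γ)).character g
        = LinearMap.trace ℝ U (δ g⁻¹) * LinearMap.trace ℝ V (γ g) := by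
      intro g
      exact FDRep.char_linHom (FDRep.of δ) (FDRep.of γ) g
    rw [Finset.sum_congr rfl (fun g _ => h2 g)] at h
    rw [smul_eq_mul, invOf_eq_inv, ← Nat.card_eq_fintype_card]
    exact h
  have k1 := key α
  have k2 := key β
  rw [Finset.sum_congr rfl (fun g _ => by rw [hchar g⁻¹])] at k1
  rw [k2] at k1
  have : (finrank ℝ (Representation.linHom α γ).invariants : ℝ)
      = (finrank ℝ (Representation.linHom β γ).invariants : ℝ) := by
    rw [← k1]
  rw [repHom_eq_invariants, repHom_eq_invariants]
  exact_mod_cast this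

end RepTools

section Main

variable {K : Type} [Group K] {H : Subgroup K} [H.Normal] {U : Type} [AddCommGroup U] [Module ℝ U]

/-- Conjugation by `g₀` as a homomorphism of the normal subgroup `H`. -/
def conjHom (g₀ : K) : H →* H where
  toFun h := ⟨g₀ * ↑h * g₀⁻¹, Subgroup.Normal.conj_mem ‹H.Normal› _ h.2 g₀⟩
  map_one' := by ext; simp
  map_mul' a b := by
    ext
    show g₀ * ↑(a * b) * g₀⁻¹ = (g₀ * ↑a * g₀⁻¹) * (g₀ * ↑b * g₀⁻¹)
    rw [Subgroup.coe_mul]; group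

lemma conjHom_conjHom_inv (g₀ : K) (h : H) : conjHom g₀ (conjHom g₀⁻¹ h) = h := by
  ext; simp [conjHom]; group

lemma index_two_facts (hidx : H.index = 2) :
    ∃ g₀ : K, g₀ ∉ H ∧ g₀ * g₀ ∈ H ∧ (∀ k : K, k ∉ H → k * g₀⁻¹ ∈ H) := by
  obtain ⟨a, ha⟩ := Subgroup.index_eq_two_iff.1 hidx
  have h1 : a ∉ H := by
    have := ha 1
    rw [one_mul] at this
    rcases this with ⟨_, h⟩ | ⟨_, h⟩
    · exact absurd H.one_mem h
    · exact h
  have h2 : ∀ k : K, k ∉ H → k * a ∈ H := by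
    intro k hk
    rcases ha k with ⟨h, _⟩ | ⟨h, _⟩
    · exact h
    · exact absurd h hk
  refine ⟨a, h1, h2 a h1, fun k hk => ?_⟩
  have hka := h2 k hk
  have haa := h2 a h1
  have : k * a * (a * a)⁻¹ ∈ H := H.mul_mem hka (H.inv_mem haa)
  convert this using 1
  group

variable [Finite K] [FiniteDimensional ℝ U]

lemma exists_conj_intertwiner (ρ : Representation ℝ H U) (hirr : IsIrreducibleRep ρ)
    (hinv : charConjInvariant H ρ) (g₀ : K) :
    ∃ S : U ≃ₗ[ℝ] U, ∀ (h : H) (u : U), S (ρ (conjHom g₀ h) u) = ρ h (S u) := by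
  haveI := Fintype.ofFinite ↥H
  set ρ' := ρ.comp (conjHom g₀) with hρ'
  have htr : ∀ h : H, LinearMap.trace ℝ U (ρ' h) = LinearMap.trace ℝ U (ρ h) := by
    intro h
    apply hinv g₀⁻¹ h (conjHom g₀ h)
    simp [conjHom]
  have hdim := finrank_repHom_eq_of_traces_eq ρ' ρ ρ htr
  have hid : (LinearMap.id : U →ₗ[ℝ] U) ∈ repHom ρ ρ := fun g u => rfl
  obtain ⟨u0, hu0⟩ := hirr.1
  have hbot : repHom ρ ρ ≠ ⊥ := by
    intro hb
    rw [hb] at hid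
    have : (LinearMap.id : U →ₗ[ℝ] U) = 0 := by simpa using hid
    exact hu0 (by simpa using congrArg (fun f => f u0) this)
  have hne : finrank ℝ (repHom ρ ρ) ≠ 0 := by
    intro h0
    exact hbot (Submodule.finrank_eq_zero.1 h0)
  have hne' : repHom ρ' ρ ≠ ⊥ := by
    intro hb
    rw [hb, finrank_bot] at hdim
    exact hne hdim.symm
  obtain ⟨T, hT, hT0⟩ := Submodule.exists_mem_ne_zero_of_ne_bot hne'
  have hirr' : IsIrreducibleRep ρ' := by
    refine ⟨hirr.1, fun p hp => hirr.2 p ?_⟩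
    intro h u hu
    have key : ρ h u = ρ' (conjHom g₀⁻¹ h) u := by
      rw [hρ']
      show ρ h u = ρ (conjHom g₀ (conjHom g₀⁻¹ h)) u
      rw [conjHom_conjHom_inv]
    rw [key]
    exact hp _ u hu
  have hbij := schur_bijective hirr' hirr hT hT0
  exact ⟨LinearEquiv.ofBijective T hbij, fun h u => hT h u⟩

lemma exists_ind_equiv (ρ : Representation ℝ H U) (g₀ : K) (hg₀ : g₀ ∉ H)
    (hg₀2 : g₀ * g₀ ∈ H) (hcos : ∀ k : K, k ∉ H → k * g₀⁻¹ ∈ H)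
    (S : U ≃ₗ[ℝ] U) (hS : ∀ (h : H) (u : U), S (ρ (conjHom g₀ h) u) = ρ h (S u)) :
    ∃ E : ↥(indSubmodule H ρ) ≃ₗ[ℝ] U × U,
      (∀ f : ↥(indSubmodule H ρ), E f = (f.1 1, S (f.1 g₀))) ∧
      (∀ (h : H) (f : ↥(indSubmodule H ρ)),
        E (indRep H ρ h f) = doubleRep ρ h (E f)) ∧
      (∀ f : ↥(indSubmodule H ρ),
        E (indRep H ρ g₀ f) = (S.symm (E f).2, S (ρ ⟨g₀ * g₀, hg₀2⟩ (E f).1))) := by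
  classical
  have hmem : ∀ u v : U, (fun k => if hk : k ∈ H then ρ ⟨k, hk⟩ u
      else ρ ⟨k * g₀⁻¹, hcos k hk⟩ (S.symm v)) ∈ indSubmodule H ρ := by
    intro u v h k
    dsimp only
    by_cases hk : k ∈ H
    · have hhk : (↑h : K) * k ∈ H := H.mul_mem h.2 hk
      rw [dif_pos hhk, dif_pos hk]
      rw [show (⟨↑h * k, hhk⟩ : H) = h * ⟨k, hk⟩ from rfl, map_mul]
      rfl
    · have hhk : (↑h : K) * k ∉ H := by
        intro hmem'
        apply hk
        have := H.mul_mem (H.inv_mem h.2) hmem'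
        simpa [← mul_assoc] using this
      rw [dif_neg hhk, dif_neg hk]
      rw [show (⟨↑h * k * g₀⁻¹, hcos _ hhk⟩ : H)
          = h * ⟨k * g₀⁻¹, hcos k hk⟩ from Subtype.ext (by simp [mul_assoc]), map_mul]
      rfl
  set E : ↥(indSubmodule H ρ) ≃ₗ[ℝ] U × U :=
    { toFun := fun f => (f.1 1, S (f.1 g₀))
      map_add' := by intro f g; simp
      map_smul' := by intro c f; simp
      invFun := fun w => ⟨fun k => if hk : k ∈ H then ρ ⟨k, hk⟩ w.1
          else ρ ⟨k * g₀⁻¹, hcos k hk⟩ (S.symm w.2), hmem w.1 w.2⟩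
      left_inv := by
        intro f
        apply Subtype.ext
        funext k
        show (if hk : k ∈ H then ρ ⟨k, hk⟩ (f.1 1)
          else ρ ⟨k * g₀⁻¹, hcos k hk⟩ (S.symm (S (f.1 g₀)))) = f.1 k
        by_cases hk : k ∈ H
        · rw [dif_pos hk, ← f.2 ⟨k, hk⟩ 1]
          norm_num
        · rw [dif_neg hk, S.symm_apply_apply]
          have harg : (↑(⟨k * g₀⁻¹, hcos k hk⟩ : H) : K) * g₀ = k := by
            show k * g₀⁻¹ * g₀ = k
            group
          conv_rhs => rw [← harg]
          rw [f.2 ⟨k * g₀⁻¹, hcos k hk⟩ g₀]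
      right_inv := by
        intro w
        have h1 : (1 : K) ∈ H := H.one_mem
        apply Prod.ext
        · show (if hk : (1:K) ∈ H then ρ ⟨1, hk⟩ w.1
            else ρ ⟨1 * g₀⁻¹, hcos 1 hk⟩ (S.symm w.2)) = w.1
          rw [dif_pos h1, show (⟨(1:K), h1⟩ : H) = 1 from rfl, map_one]
          rfl
        · show S (if hk : g₀ ∈ H then ρ ⟨g₀, hk⟩ w.1
            else ρ ⟨g₀ * g₀⁻¹, hcos g₀ hk⟩ (S.symm w.2)) = w.2
          rw [dif_neg hg₀, show (⟨g₀ * g₀⁻¹, hcos g₀ hg₀⟩ : H) = 1 from Subtype.ext (by simp),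
            map_one]
          show S (S.symm w.2) = w.2
          rw [S.apply_symm_apply] } with hEdef
  have hEapp : ∀ f : ↥(indSubmodule H ρ), E f = (f.1 1, S (f.1 g₀)) := fun f => rfl
  have hind : ∀ (g : K) (f : ↥(indSubmodule H ρ)) (k : K),
      ((indRep H ρ g f) : K → U) k = f.1 (k * g) := fun g f k => rfl
  refine ⟨E, hEapp, ?_, ?_⟩
  · intro h f
    rw [hEapp, hEapp]
    have h1 : (indRep H ρ (↑h) f).1 1 = ρ h (f.1 1) := by
      rw [hind, ← f.2 h 1]
      norm_num
    have h2 : (indRep H ρ (↑h) f).1 g₀ = ρ (conjHom g₀ h) (f.1 g₀) := by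
      have harg : g₀ * (h : K) = (↑(conjHom g₀ h) : K) * g₀ := by
        show g₀ * ↑h = (g₀ * ↑h * g₀⁻¹) * g₀
        group
      rw [hind, harg, f.2 (conjHom g₀ h) g₀]
    rw [h1, h2, hS]
    rfl
  · intro f
    rw [hEapp, hEapp]
    have h1 : (indRep H ρ g₀ f).1 1 = S.symm (S (f.1 g₀)) := by
      rw [hind, S.symm_apply_apply, one_mul]
    have h2 : (indRep H ρ g₀ f).1 g₀ = ρ ⟨g₀ * g₀, hg₀2⟩ (f.1 1) := by
      rw [hind, ← f.2 ⟨g₀ * g₀, hg₀2⟩ 1]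
      norm_num
    rw [h1, h2]

omit [Finite K] in
lemma classify_invariant_submodule (ρ : Representation ℝ H U) (hirr : IsIrreducibleRep ρ)
    (q : Submodule ℝ (U × U)) (hq : ∀ (h : H) (w : U × U), w ∈ q → doubleRep ρ h w ∈ q)
    (h1 : q ≠ ⊥) (h2 : q ≠ ⊤) :
    ∃ ι : U →ₗ[ℝ] U × U, Function.Injective ι ∧ LinearMap.range ι = q ∧
      ∀ (h : H) (u : U), ι (ρ h u) = doubleRep ρ h (ι u) := by
  have hdr : ∀ (h : H) (w : U × U), doubleRep ρ h w = (ρ h w.1, ρ h w.2) := fun h w => rfl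
  set k₁ : Submodule ℝ U := q.comap (LinearMap.inr ℝ U U) with hk₁
  set p₁ : Submodule ℝ U := q.map (LinearMap.fst ℝ U U) with hp₁
  have hk₁inv : k₁ = ⊥ ∨ k₁ = ⊤ := by
    apply hirr.2
    intro h u hu
    have : doubleRep ρ h (0, u) ∈ q := hq h _ hu
    rw [hdr, map_zero] at this
    exact this
  have hp₁inv : p₁ = ⊥ ∨ p₁ = ⊤ := by
    apply hirr.2
    intro h u hu
    obtain ⟨w, hw, hwu⟩ := hu
    refine ⟨doubleRep ρ h w, hq h w hw, ?_⟩
    rw [hdr]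
    show ρ h w.1 = ρ h u
    rw [← hwu]
    rfl
  rcases hk₁inv with hk | hk
  · -- k₁ = ⊥ : second components of elements with zero first component vanish
    have hker : ∀ w : U × U, w ∈ q → w.1 = 0 → w = 0 := by
      intro w hw hw1
      have : w.2 ∈ k₁ := by
        show (0, w.2) ∈ q
        have : w = (0, w.2) := by rw [← hw1]
        rwa [← this]
      rw [hk] at this
      have : w.2 = 0 := this
      rw [Prod.ext_iff]
      exact ⟨hw1, this⟩
    rcases hp₁inv with hp | hp
    · exfalso
      apply h1
      rw [eq_bot_iff]
      intro w hw
      have hw1 : w.1 ∈ p₁ := ⟨w, hw, rfl⟩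
      rw [hp] at hw1
      have : w.1 = 0 := hw1
      simpa using hker w hw this
    · -- graph case
      set e₁ : ↥q →ₗ[ℝ] U := (LinearMap.fst ℝ U U).comp q.subtype with he₁
      have hbij : Function.Bijective e₁ := by
        constructor
        · intro a b hab
          apply Subtype.ext
          have : ((a : U × U) - b) ∈ q := q.sub_mem a.2 b.2
          have hz := hker _ this (by
            show ((a : U × U).1 - (b : U × U).1) = 0
            rw [sub_eq_zero]
            exact hab)
          have := sub_eq_zero.1 hz
          exact this
        · intro u
          have : u ∈ p₁ := by rw [hp]; trivial
          obtain ⟨w, hw, hwu⟩ := this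
          exact ⟨⟨w, hw⟩, hwu⟩
      set E₁ : ↥q ≃ₗ[ℝ] U := LinearEquiv.ofBijective e₁ hbij with hE₁
      set ι : U →ₗ[ℝ] U × U := q.subtype.comp (E₁.symm : U →ₗ[ℝ] ↥q) with hι
      have hι1 : ∀ u, (ι u).1 = u := by
        intro u
        show e₁ (E₁.symm u) = u
        exact E₁.apply_symm_apply u
      have hιq : ∀ u, ι u ∈ q := fun u => (E₁.symm u).2
      refine ⟨ι, ?_, ?_, ?_⟩
      · intro a b hab
        rw [← hι1 a, ← hι1 b, hab]
      · apply le_antisymm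
        · rintro w ⟨u, rfl⟩
          exact hιq u
        · intro w hw
          refine ⟨w.1, ?_⟩
          have hmem : (ι w.1 - w) ∈ q := q.sub_mem (hιq w.1) hw
          have : (ι w.1 - w).1 = 0 := by
            show (ι w.1).1 - w.1 = 0
            rw [hι1, sub_self]
          have := hker _ hmem this
          rw [sub_eq_zero] at this
          exact this
      · intro h u
        have hmem : (ι (ρ h u) - doubleRep ρ h (ι u)) ∈ q :=
          q.sub_mem (hιq _) (hq h _ (hιq u))
        have hfst : (ι (ρ h u) - doubleRep ρ h (ι u)).1 = 0 := by
          show (ι (ρ h u)).1 - (doubleRep ρ h (ι u)).1 = 0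
          rw [hι1, hdr]
          show ρ h u - ρ h (ι u).1 = 0
          rw [hι1, sub_self]
        have := hker _ hmem hfst
        rw [sub_eq_zero] at this
        exact this
  · -- k₁ = ⊤ : q contains 0 × U
    have hcontains : ∀ v : U, ((0 : U), v) ∈ q := by
      intro v
      have : v ∈ k₁ := by rw [hk]; trivial
      exact this
    rcases hp₁inv with hp | hp
    · refine ⟨LinearMap.inr ℝ U U, fun a b hab => by simpa using hab, ?_, ?_⟩
      · apply le_antisymm
        · rintro w ⟨v, rfl⟩
          exact hcontains v
        · intro w hw
          have hw1 : w.1 ∈ p₁ := ⟨w, hw, rfl⟩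
          rw [hp] at hw1
          have h0 : w.1 = 0 := hw1
          refine ⟨w.2, ?_⟩
          show ((0 : U), w.2) = w
          rw [Prod.ext_iff]
          exact ⟨h0.symm, rfl⟩
      · intro h u
        rw [hdr]
        show ((0:U), ρ h u) = (ρ h 0, ρ h u)
        rw [map_zero]
    · exfalso
      apply h2
      rw [eq_top_iff]
      intro w _
      have hw1 : w.1 ∈ p₁ := by rw [hp]; trivial
      obtain ⟨w', hw', hww⟩ := hw1
      have : w = w' + (0, w.2 - w'.2) := by
        rw [Prod.ext_iff]
        constructor
        · have hww' : w'.1 = w.1 := hww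
          simp [← hww']
        · simp
      rw [this]
      exact q.add_mem hw' (hcontains _)

lemma ind_irreducible (ρ : Representation ℝ H U) (hirr : IsIrreducibleRep ρ)
    (E : ↥(indSubmodule H ρ) ≃ₗ[ℝ] U × U)
    (hEh : ∀ (h : H) (f : ↥(indSubmodule H ρ)), E (indRep H ρ h f) = doubleRep ρ h (E f))
    (hnoext : ¬ ∃ σ : Representation ℝ K U, RepIso (resRep H σ) ρ) :
    IsIrreducibleRep (indRep H ρ) := by
  obtain ⟨u₀, hu₀⟩ := hirr.1
  constructor
  · refine ⟨E.symm (u₀, (0 : U)), ?_⟩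
    intro h0
    apply hu₀
    have : ((u₀, (0:U)) : U × U) = 0 := by
      have := congrArg E h0
      rwa [E.apply_symm_apply, map_zero] at this
    exact congrArg Prod.fst this
  intro p hp
  by_contra hcon
  push_neg at hcon
  obtain ⟨hpbot, hptop⟩ := hcon
  set q : Submodule ℝ (U × U) := p.map (E : ↥(indSubmodule H ρ) →ₗ[ℝ] U × U) with hqdef
  have hqmem : ∀ w : U × U, w ∈ q ↔ E.symm w ∈ p := by
    intro w
    constructor
    · rintro ⟨f, hf, rfl⟩
      simpa using hf
    · intro hw
      exact ⟨E.symm w, hw, E.apply_symm_apply w⟩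
  have hq : ∀ (h : H) (w : U × U), w ∈ q → doubleRep ρ h w ∈ q := by
    rintro h w ⟨f, hf, rfl⟩
    exact ⟨indRep H ρ h f, hp h f hf, hEh h f⟩
  have hq1 : q ≠ ⊥ := by
    intro hb
    apply hpbot
    rw [eq_bot_iff]
    intro f hf
    have : E f ∈ q := ⟨f, hf, rfl⟩
    rw [hb] at this
    have h0 : E f = 0 := this
    have := congrArg E.symm h0
    rwa [E.symm_apply_apply, map_zero] at this
  have hq2 : q ≠ ⊤ := by
    intro ht
    apply hptop
    rw [eq_top_iff]
    intro f _
    have : E f ∈ q := by rw [ht]; trivial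
    rw [hqmem, E.symm_apply_apply] at this
    exact this
  obtain ⟨ι, hιinj, hιrange, hιeq⟩ := classify_invariant_submodule ρ hirr q hq hq1 hq2
  set κ : U →ₗ[ℝ] ↥(indSubmodule H ρ) := (E.symm : U × U →ₗ[ℝ] ↥(indSubmodule H ρ)).comp ι
    with hκdef
  have hκapp : ∀ u, κ u = E.symm (ι u) := fun u => rfl
  have hκinj : Function.Injective κ := by
    intro a b hab
    apply hιinj
    rw [hκapp, hκapp] at hab
    have := congrArg E hab
    rwa [E.apply_symm_apply, E.apply_symm_apply] at this
  have hκmem : ∀ u, κ u ∈ p := by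
    intro u
    rw [hκapp, ← hqmem, ← hιrange]
    exact ⟨u, rfl⟩
  have hκsurj : ∀ f, f ∈ p → ∃ u, κ u = f := by
    intro f hf
    have : E f ∈ q := ⟨f, hf, rfl⟩
    rw [← hιrange] at this
    obtain ⟨u, hu⟩ := this
    exact ⟨u, by rw [hκapp, hu, E.symm_apply_apply]⟩
  have hκeq : ∀ (h : H) (u : U), κ (ρ h u) = indRep H ρ h (κ u) := by
    intro h u
    apply E.injective
    rw [hκapp, E.apply_symm_apply, hEh, hκapp, E.apply_symm_apply, hιeq]
  have hrestrict : ∀ k : K, ∀ x ∈ p, indRep H ρ k x ∈ p := fun k x hx => hp k x hx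
  set a : K → (↥p →ₗ[ℝ] ↥p) := fun k => (indRep H ρ k).restrict (hrestrict k) with hadef
  have ha : ∀ (k : K) (x : ↥p),
      (a k x : ↥(indSubmodule H ρ)) = indRep H ρ k x := fun k x => rfl
  set e0 : U →ₗ[ℝ] ↥p := κ.codRestrict p hκmem with he0
  have he0app : ∀ u, (e0 u : ↥(indSubmodule H ρ)) = κ u := fun u => rfl
  have he0bij : Function.Bijective e0 := by
    constructor
    · intro x y hxy
      apply hκinj
      rw [← he0app, ← he0app, hxy]
    · intro x
      obtain ⟨u, hu⟩ := hκsurj x x.2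
      exact ⟨u, Subtype.ext (by rw [he0app, hu])⟩
  set e : U ≃ₗ[ℝ] ↥p := LinearEquiv.ofBijective e0 he0bij with he
  have heapp : ∀ u, (e u : ↥(indSubmodule H ρ)) = κ u := fun u => rfl
  set F : K → Module.End ℝ U :=
    fun k => (e.symm : ↥p →ₗ[ℝ] U) ∘ₗ (a k) ∘ₗ (e : U →ₗ[ℝ] ↥p) with hFdef
  have hFapp : ∀ (k : K) (u : U), F k u = e.symm (a k (e u)) := fun k u => rfl
  have hF1 : F 1 = 1 := by
    apply LinearMap.ext
    intro u
    have h1 : a 1 (e u) = e u := Subtype.ext (by rw [ha, map_one]; rfl)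
    show e.symm (a 1 (e u)) = u
    rw [h1, e.symm_apply_apply]
  have hFm : ∀ g g' : K, F (g * g') = F g * F g' := by
    intro g g'
    apply LinearMap.ext
    intro u
    show e.symm (a (g * g') (e u)) = e.symm (a g (e (e.symm (a g' (e u)))))
    rw [e.apply_symm_apply]
    congr 1
    apply Subtype.ext
    rw [ha, map_mul, ha, ha]
    rfl
  set σ : Representation ℝ K U := ⟨⟨F, hF1⟩, hFm⟩ with hσ
  apply hnoext
  refine ⟨σ, LinearEquiv.refl ℝ U, ?_⟩
  intro h u
  have hkey : a (↑h) (e u) = e (ρ h u) := by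
    apply Subtype.ext
    rw [ha, heapp, heapp, ← hκeq]
  show e.symm (a (↑h) (e u)) = ρ h u
  rw [hkey, e.symm_apply_apply]

set_option maxHeartbeats 3000000 in
set_option synthInstance.maxHeartbeats 500000 in
omit [Finite K] in
lemma ind_repHom_equiv (ρ : Representation ℝ H U) (g₀ : K) (hg₀2 : g₀ * g₀ ∈ H)
    (hcos : ∀ k : K, k ∉ H → k * g₀⁻¹ ∈ H)
    (S : U ≃ₗ[ℝ] U) (hS : ∀ (h : H) (u : U), S (ρ (conjHom g₀ h) u) = ρ h (S u))
    (E : ↥(indSubmodule H ρ) ≃ₗ[ℝ] U × U)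
    (hEh : ∀ (h : H) (f : ↥(indSubmodule H ρ)), E (indRep H ρ h f) = doubleRep ρ h (E f))
    (hEg : ∀ f : ↥(indSubmodule H ρ),
      E (indRep H ρ g₀ f) = (S.symm (E f).2, S (ρ ⟨g₀ * g₀, hg₀2⟩ (E f).1))) :
    dimRepHom (indRep H ρ) (indRep H ρ) = 2 * dimRepHom ρ ρ := by
  classical
  letI iacg : AddCommGroup (↥(indSubmodule H ρ) →ₗ[ℝ] ↥(indSubmodule H ρ)) :=
    LinearMap.addCommGroup
  letI imod : Module ℝ (↥(indSubmodule H ρ) →ₗ[ℝ] ↥(indSubmodule H ρ)) :=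
    LinearMap.module
  set g2 : H := ⟨g₀ * g₀, hg₀2⟩ with hg2def
  have hμ2 : conjHom g₀ g2 = g2 := Subtype.ext (by show g₀ * (g₀ * g₀) * g₀⁻¹ = g₀ * g₀; group)
  have hSg2 : ∀ u, S (ρ g2 u) = ρ g2 (S u) := by
    intro u
    have := hS g2 u
    rwa [hμ2] at this
  have hSsymm : ∀ (h : H) (u : U), S.symm (ρ h u) = ρ (conjHom g₀ h) (S.symm u) := by
    intro h u
    apply S.injective
    rw [S.apply_symm_apply, hS, S.apply_symm_apply]
  have hEsymm : ∀ (h : H) (w : U × U),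
      E.symm (doubleRep ρ h w) = indRep H ρ h (E.symm w) := by
    intro h w
    apply E.injective
    rw [E.apply_symm_apply, hEh, E.apply_symm_apply]
  have hdr : ∀ (h : H) (w : U × U), doubleRep ρ h w = (ρ h w.1, ρ h w.2) := fun h w => rfl
  have hJ : ∀ w : U × U, E (indRep H ρ g₀ (E.symm w)) = (S.symm w.2, S (ρ g2 w.1)) := by
    intro w
    rw [hEg, E.apply_symm_apply]
  have hJsurj : ∀ ab : U × U, ∃ w : U × U, (S.symm w.2, S (ρ g2 w.1)) = ab := by
    intro ab
    refine ⟨(ρ g2⁻¹ (S.symm ab.2), S ab.1), ?_⟩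
    have h1 : S.symm (S ab.1) = ab.1 := S.symm_apply_apply _
    have h2 : S (ρ g2 (ρ g2⁻¹ (S.symm ab.2))) = ab.2 := by
      rw [rep_inv_apply, S.apply_symm_apply]
    rw [h1, h2]
  set D := repHom ρ ρ with hD
  set toMat : ↥(repHom (indRep H ρ) (indRep H ρ)) → (U × U →ₗ[ℝ] U × U) := fun F =>
    (E : ↥(indSubmodule H ρ) →ₗ[ℝ] U × U) ∘ₗ F.1 ∘ₗ
      (E.symm : U × U →ₗ[ℝ] ↥(indSubmodule H ρ)) with htoMat
  have htoMatApp : ∀ F w, toMat F w = E (F.1 (E.symm w)) := fun F w => rfl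
  have hMh : ∀ (F : ↥(repHom (indRep H ρ) (indRep H ρ))) (h : H) (w : U × U),
      toMat F (doubleRep ρ h w) = doubleRep ρ h (toMat F w) := by
    intro F h w
    rw [htoMatApp, htoMatApp, hEsymm, F.2 (↑h : K) (E.symm w), hEh]
  have hMJc : ∀ (F : ↥(repHom (indRep H ρ) (indRep H ρ))) (w : U × U),
      toMat F (S.symm w.2, S (ρ g2 w.1))
        = (S.symm (toMat F w).2, S (ρ g2 (toMat F w).1)) := by
    intro F w
    rw [htoMatApp, ← hJ w, E.symm_apply_apply, F.2 g₀ (E.symm w), hEg]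
    rfl
  -- the two projections are in D
  have hprojmem : ∀ (F : ↥(repHom (indRep H ρ) (indRep H ρ))) (c : U →ₗ[ℝ] U × U),
      (∀ (h : H) (u : U), c (ρ h u) = doubleRep ρ h (c u)) →
      (LinearMap.fst ℝ U U) ∘ₗ (toMat F) ∘ₗ c ∈ D := by
    intro F c hc h u
    show (toMat F (c (ρ h u))).1 = ρ h ((toMat F (c u)).1)
    rw [hc, hMh, hdr]
  have hinlc : ∀ (h : H) (u : U),
      (LinearMap.inl ℝ U U) (ρ h u) = doubleRep ρ h ((LinearMap.inl ℝ U U) u) := by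
    intro h u
    rw [hdr]
    show ((ρ h u, (0:U)) : U × U) = (ρ h u, ρ h 0)
    rw [map_zero]
  have hinrc : ∀ (h : H) (u : U),
      (LinearMap.inr ℝ U U) (ρ h u) = doubleRep ρ h ((LinearMap.inr ℝ U U) u) := by
    intro h u
    rw [hdr]
    show (((0:U), ρ h u) : U × U) = (ρ h 0, ρ h u)
    rw [map_zero]
  set Θ : ↥(repHom (indRep H ρ) (indRep H ρ)) →ₗ[ℝ] ↥D × ↥D :=
    { toFun := fun F => (⟨(LinearMap.fst ℝ U U) ∘ₗ (toMat F) ∘ₗ LinearMap.inl ℝ U U,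
          hprojmem F _ hinlc⟩,
        ⟨(LinearMap.fst ℝ U U) ∘ₗ (toMat F) ∘ₗ LinearMap.inr ℝ U U, hprojmem F _ hinrc⟩)
      map_add' := by
        intro F G
        refine Prod.ext (Subtype.ext ?_) (Subtype.ext ?_) <;>
        · apply LinearMap.ext
          intro u
          show (toMat (F + G) _).1 = (toMat F _).1 + (toMat G _).1
          rw [htoMatApp, htoMatApp, htoMatApp]
          show (E ((F.1 + G.1) _)).1 = _
          rw [LinearMap.add_apply, map_add]
          rfl
      map_smul' := by
        intro c F
        refine Prod.ext (Subtype.ext ?_) (Subtype.ext ?_) <;>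
        · apply LinearMap.ext
          intro u
          show (toMat (c • F) _).1 = c • (toMat F _).1
          rw [htoMatApp, htoMatApp]
          show (E ((c • F.1) _)).1 = _
          rw [LinearMap.smul_apply, map_smul]
          rfl } with hΘ
  have hΘapp1 : ∀ F u, ((Θ F).1 : U →ₗ[ℝ] U) u = (toMat F (u, 0)).1 := fun F u => rfl
  have hΘapp2 : ∀ F v, ((Θ F).2 : U →ₗ[ℝ] U) v = (toMat F (0, v)).1 := fun F v => rfl
  have hinj : Function.Injective Θ := by
    rw [← LinearMap.ker_eq_bot]
    rw [eq_bot_iff]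
    intro F hF
    have hF0 : Θ F = 0 := hF
    have hx0 : ∀ u, (toMat F (u, 0)).1 = 0 := by
      intro u
      rw [← hΘapp1, hF0]
      rfl
    have hy0 : ∀ v, (toMat F (0, v)).1 = 0 := by
      intro v
      rw [← hΘapp2, hF0]
      rfl
    have hfst : ∀ w : U × U, (toMat F w).1 = 0 := by
      intro w
      have hsplit : w = ((w.1, 0) : U × U) + (0, w.2) := by
        rw [Prod.ext_iff]
        constructor <;> simp
      rw [hsplit, map_add]
      show (toMat F (w.1, 0)).1 + (toMat F (0, w.2)).1 = 0
      rw [hx0, hy0, add_zero]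
    have hsnd : ∀ ab : U × U, (toMat F ab).2 = 0 := by
      intro ab
      obtain ⟨w, hw⟩ := hJsurj ab
      rw [← hw, hMJc]
      show S (ρ g2 (toMat F w).1) = 0
      rw [hfst, map_zero, map_zero]
    have : F.1 = 0 := by
      apply LinearMap.ext
      intro f
      have hm : toMat F (E f) = E (F.1 f) := by rw [htoMatApp, E.symm_apply_apply]
      have hz : toMat F (E f) = 0 := by
        rw [Prod.ext_iff]
        exact ⟨hfst _, hsnd _⟩
      rw [hm] at hz
      have := congrArg E.symm hz
      rwa [E.symm_apply_apply, map_zero] at this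
    show F ∈ (⊥ : Submodule ℝ _)
    rw [Submodule.mem_bot]
    exact Subtype.ext this
  have hsurj : Function.Surjective Θ := by
    rintro ⟨⟨x, hx⟩, ⟨y, hy⟩⟩
    set z : U →ₗ[ℝ] U := S.toLinearMap ∘ₗ y ∘ₗ S.toLinearMap ∘ₗ (ρ g2) with hz
    set w : U →ₗ[ℝ] U := S.toLinearMap ∘ₗ x ∘ₗ S.symm.toLinearMap with hw
    set Mxy : U × U →ₗ[ℝ] U × U := LinearMap.prod
      (x ∘ₗ LinearMap.fst ℝ U U + y ∘ₗ LinearMap.snd ℝ U U)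
      (z ∘ₗ LinearMap.fst ℝ U U + w ∘ₗ LinearMap.snd ℝ U U) with hMxy
    have hMapp : ∀ ab : U × U,
        Mxy ab = (x ab.1 + y ab.2, S (y (S (ρ g2 ab.1))) + S (x (S.symm ab.2))) :=
      fun ab => rfl
    have hρg2h : ∀ (h : H) (u : U), ρ g2 (ρ h u)
        = ρ (conjHom g₀ (conjHom g₀ h)) (ρ g2 u) := by
      intro h u
      have hg2h : g2 * h = conjHom g₀ (conjHom g₀ h) * g2 := Subtype.ext (by
        show (g₀ * g₀) * ↑h = (g₀ * (g₀ * ↑h * g₀⁻¹) * g₀⁻¹) * (g₀ * g₀)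
        group)
      have hEnd : ρ g2 * ρ h = ρ (conjHom g₀ (conjHom g₀ h)) * ρ g2 := by
        rw [← map_mul, ← map_mul, hg2h]
      have := LinearMap.ext_iff.1 hEnd u
      simpa using this
    have hzh : ∀ (h : H) (u : U), S (y (S (ρ g2 (ρ h u)))) = ρ h (S (y (S (ρ g2 u)))) := by
      intro h u
      rw [hρg2h, hS, hy, hS]
    have hwh : ∀ (h : H) (v : U), S (x (S.symm (ρ h v))) = ρ h (S (x (S.symm v))) := by
      intro h v
      rw [hSsymm, hx, hS]
    have hMcommh : ∀ (h : H) (ab : U × U), Mxy (doubleRep ρ h ab) = doubleRep ρ h (Mxy ab) := by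
      intro h ab
      rw [hdr, hMapp, hMapp, hdr]
      refine Prod.ext ?_ ?_
      · show x (ρ h ab.1) + y (ρ h ab.2) = ρ h (x ab.1 + y ab.2)
        rw [hx, hy, map_add]
      · show S (y (S (ρ g2 (ρ h ab.1)))) + S (x (S.symm (ρ h ab.2)))
          = ρ h (S (y (S (ρ g2 ab.1))) + S (x (S.symm ab.2)))
        rw [hzh, hwh, map_add]
    have hMcommJ : ∀ ab : U × U, Mxy (S.symm ab.2, S (ρ g2 ab.1))
        = (S.symm (Mxy ab).2, S (ρ g2 (Mxy ab).1)) := by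
      intro ab
      rw [hMapp, hMapp]
      refine Prod.ext ?_ ?_
      · show x (S.symm ab.2) + y (S (ρ g2 ab.1))
          = S.symm (S (y (S (ρ g2 ab.1))) + S (x (S.symm ab.2)))
        rw [map_add, S.symm_apply_apply, S.symm_apply_apply, add_comm]
      · show S (y (S (ρ g2 (S.symm ab.2)))) + S (x (S.symm (S (ρ g2 ab.1))))
          = S (ρ g2 (x ab.1 + y ab.2))
        rw [S.symm_apply_apply, hSg2, S.apply_symm_apply, hy, hx, map_add, map_add, add_comm]
    set Fmap : ↥(indSubmodule H ρ) →ₗ[ℝ] ↥(indSubmodule H ρ) :=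
      (E.symm : U × U →ₗ[ℝ] ↥(indSubmodule H ρ)) ∘ₗ Mxy ∘ₗ
        (E : ↥(indSubmodule H ρ) →ₗ[ℝ] U × U) with hFm
    have hFapp : ∀ f, Fmap f = E.symm (Mxy (E f)) := fun f => rfl
    have hFh : ∀ (h : H) (f : ↥(indSubmodule H ρ)),
        Fmap (indRep H ρ h f) = indRep H ρ h (Fmap f) := by
      intro h f
      rw [hFapp, hEh, hMcommh, hEsymm, hFapp]
    have hFg : ∀ f, Fmap (indRep H ρ g₀ f) = indRep H ρ g₀ (Fmap f) := by
      intro f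
      apply E.injective
      rw [hEg]
      rw [show E (Fmap (indRep H ρ g₀ f)) = Mxy (E (indRep H ρ g₀ f)) by
        rw [hFapp, E.apply_symm_apply]]
      rw [show E (Fmap f) = Mxy (E f) by rw [hFapp, E.apply_symm_apply]]
      rw [hEg]
      exact hMcommJ (E f)
    have hFmem : Fmap ∈ repHom (indRep H ρ) (indRep H ρ) := by
      intro g f
      by_cases hg : g ∈ H
      · exact hFh ⟨g, hg⟩ f
      · have hg' : g * g₀⁻¹ ∈ H := hcos g hg
        have hmul : indRep H ρ g = indRep H ρ (g * g₀⁻¹) * indRep H ρ g₀ := by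
          rw [← map_mul]
          congr 1
          group
        rw [hmul]
        show Fmap (indRep H ρ (g * g₀⁻¹) (indRep H ρ g₀ f))
          = indRep H ρ (g * g₀⁻¹) (indRep H ρ g₀ (Fmap f))
        rw [hFh ⟨g * g₀⁻¹, hg'⟩, hFg]
    refine ⟨⟨Fmap, hFmem⟩, ?_⟩
    have hMF : ∀ ab, toMat ⟨Fmap, hFmem⟩ ab = Mxy ab := by
      intro ab
      rw [htoMatApp]
      show E (Fmap (E.symm ab)) = Mxy ab
      rw [hFapp, E.apply_symm_apply, E.apply_symm_apply]
    refine Prod.ext (Subtype.ext ?_) (Subtype.ext ?_)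
    · apply LinearMap.ext
      intro u
      show (toMat ⟨Fmap, hFmem⟩ (u, 0)).1 = x u
      rw [hMF, hMapp]
      show x u + y 0 = x u
      rw [map_zero, add_zero]
    · apply LinearMap.ext
      intro v
      show (toMat ⟨Fmap, hFmem⟩ (0, v)).1 = y v
      rw [hMF, hMapp]
      show x 0 + y v = y v
      rw [map_zero, zero_add]
  have hfr := LinearEquiv.finrank_eq (LinearEquiv.ofBijective Θ ⟨hinj, hsurj⟩)
  show Module.finrank ℝ ↥(repHom (indRep H ρ) (indRep H ρ)) = 2 * Module.finrank ℝ ↥D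
  rw [hfr, Module.finrank_prod, two_mul]

set_option synthInstance.maxHeartbeats 1000000 in
set_option maxHeartbeats 2000000 in
lemma finrank_repHom_self_le_four {G W : Type} [Group G] [AddCommGroup W] [Module ℝ W]
    [FiniteDimensional ℝ W] (τ : Representation ℝ G W) (hirr : IsIrreducibleRep τ) :
    Module.finrank ℝ (repHom τ τ) ≤ 4 := by
  set A : Subalgebra ℝ (Module.End ℝ W) :=
    { carrier := {F : Module.End ℝ W | ∀ (g : G) (w : W), F (τ g w) = τ g (F w)}
      mul_mem' := fun {a b} ha hb g w => by
        show a (b (τ g w)) = τ g (a (b w))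
        rw [hb, ha]
      one_mem' := fun g w => rfl
      add_mem' := fun {a b} ha hb g w => by
        show a (τ g w) + b (τ g w) = τ g (a w + b w)
        rw [ha, hb, map_add]
      zero_mem' := fun g w => by
        show (0 : W) = τ g 0
        rw [map_zero]
      algebraMap_mem' := fun r g w => by
        show r • τ g w = τ g (r • w)
        rw [map_smul] } with hA
  haveI hfd : FiniteDimensional ℝ ↥A :=
    FiniteDimensional.finiteDimensional_submodule (Subalgebra.toSubmodule A)
  have hu : ∀ x : ↥A, x ≠ 0 → IsUnit x := by
    intro x hx
    have hx1 : (x : Module.End ℝ W) ≠ 0 := by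
      intro h
      exact hx (Subtype.ext h)
    have hmem : (x : Module.End ℝ W) ∈ repHom τ τ := x.2
    have hbij := schur_bijective hirr hirr hmem hx1
    set Einv : W ≃ₗ[ℝ] W := LinearEquiv.ofBijective (x : Module.End ℝ W) hbij with hE
    have hEapp : ∀ w, Einv w = (x : Module.End ℝ W) w := fun w => rfl
    have hy : (Einv.symm : W →ₗ[ℝ] W) ∈ A := by
      intro g w
      apply Einv.injective
      rw [hEapp]
      show (x : Module.End ℝ W) (Einv.symm (τ g w)) = Einv (τ g (Einv.symm w))
      rw [hEapp]
      show _ = (x : Module.End ℝ W) (τ g (Einv.symm w))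
      rw [x.2 g (Einv.symm w)]
      show Einv (Einv.symm (τ g w)) = τ g (Einv (Einv.symm w))
      rw [Einv.apply_symm_apply, Einv.apply_symm_apply]
    refine ⟨⟨x, ⟨(Einv.symm : W →ₗ[ℝ] W), hy⟩, ?_, ?_⟩, rfl⟩
    · apply Subtype.ext
      apply LinearMap.ext
      intro w
      show (x : Module.End ℝ W) (Einv.symm w) = w
      exact Einv.apply_symm_apply w
    · apply Subtype.ext
      apply LinearMap.ext
      intro w
      show Einv.symm ((x : Module.End ℝ W) w) = w
      exact Einv.symm_apply_apply w
  have hle : Module.finrank ℝ ↥A ≤ 4 := finrank_le_four_of_units hu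
  have hsub : Subalgebra.toSubmodule A = repHom τ τ := by
    ext f
    exact Iff.rfl
  have heq : Module.finrank ℝ ↥(repHom τ τ) = Module.finrank ℝ ↥A := by
    rw [← hsub]
    rfl
  rw [heq]
  exact hle

end Main

set_option synthInstance.maxHeartbeats 1000000 in
set_option maxHeartbeats 2000000 in
set_option synthInstance.maxHeartbeats 1000000
set_option maxHeartbeats 2000000

/-- Let `H` be an index-two normal subgroup of a finite group `K` and `U`
an irreducible real `H`-module with `K`-invariant character.  If `U` admits no
`K`-extension, then `U` is not of quaternionic type (`d(U) ≠ 4`), the induced module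
`Ind_H^K U` is irreducible, and `Ind_H^K U` is of complex type (`d = 2`) if `U` is of real
type (`d(U) = 1`), and of quaternionic type (`d = 4`) if `U` is of complex type
(`d(U) = 2`). -/
theorem induced_of_nonextendible {K : Type} [Group K] [Finite K] (H : Subgroup K)
    [H.Normal] (hidx : H.index = 2) {U : Type} [AddCommGroup U] [Module ℝ U]
    [FiniteDimensional ℝ U] (ρ : Representation ℝ H U) (hirr : IsIrreducibleRep ρ)
    (hinv : charConjInvariant H ρ)
    (hnoext : ¬ ∃ σ : Representation ℝ K U, RepIso (resRep H σ) ρ) :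
    dimRepHom ρ ρ ≠ 4 ∧
    IsIrreducibleRep (indRep H ρ) ∧
    (dimRepHom ρ ρ = 1 → dimRepHom (indRep H ρ) (indRep H ρ) = 2) ∧
    (dimRepHom ρ ρ = 2 → dimRepHom (indRep H ρ) (indRep H ρ) = 4) := by
  obtain ⟨g₀, hg₀, hg₀2, hcos⟩ := index_two_facts hidx
  obtain ⟨S, hS⟩ := exists_conj_intertwiner ρ hirr hinv g₀
  obtain ⟨E, hEapp, hEh, hEg⟩ := exists_ind_equiv ρ g₀ hg₀ hg₀2 hcos S hS
  have hindirr : IsIrreducibleRep (indRep H ρ) := ind_irreducible ρ hirr E hEh hnoext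
  have hdim : dimRepHom (indRep H ρ) (indRep H ρ) = 2 * dimRepHom ρ ρ :=
    ind_repHom_equiv ρ g₀ hg₀2 hcos S hS E hEh hEg
  haveI hfinW : FiniteDimensional ℝ ↥(indSubmodule H ρ) := by
    haveI : Module.Finite ℝ (K → U) := Module.Finite.pi
    exact FiniteDimensional.finiteDimensional_submodule (indSubmodule H ρ)
  have hle : dimRepHom (indRep H ρ) (indRep H ρ) ≤ 4 :=
    finrank_repHom_self_le_four (indRep H ρ) hindirr
  refine ⟨?_, hindirr, ?_, ?_⟩
  · intro h4
    rw [h4] at hdim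
    omega
  · intro h1
    rw [hdim, h1]
  · intro h2
    rw [hdim, h2]
end

section
/- Let H be an index-two normal subgroup of a finite group K and let U be an irreducible real H-module with K-invariant character that admits no K-extension. Then every real K-module W with Res_H W ≅ 2U (the direct sum of two copies of U) is isomorphic to Ind_H^K U. -/
open Module

lemma doubleRep_apply {G U : Type*} [Group G] [AddCommGroup U] [Module ℝ U]
    (ρ : Representation ℝ G U) (g : G) (x : U × U) :
    doubleRep ρ g x = (ρ g x.1, ρ g x.2) := rfl

/-- Every proper nonzero invariant submodule of `U ⊕ U` is (equivariantly) a copy of `U`. -/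
lemma exists_equivariant_embedding {G U : Type*} [Group G] [AddCommGroup U] [Module ℝ U]
    (ρ : Representation ℝ G U) (hirr : IsIrreducibleRep ρ)
    (P : Submodule ℝ (U × U))
    (hP : ∀ (g : G) (x : U × U), x ∈ P → doubleRep ρ g x ∈ P)
    (hbot : P ≠ ⊥) (htop : P ≠ ⊤) :
    ∃ f : U →ₗ[ℝ] U × U, Function.Injective f ∧ LinearMap.range f = P ∧
      ∀ (g : G) (u : U), f (ρ g u) = doubleRep ρ g (f u) := by
  set K2 : Submodule ℝ U := P.comap (LinearMap.inr ℝ U U) with hK2def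
  have hK2mem : ∀ u : U, u ∈ K2 ↔ ((0 : U), u) ∈ P := fun u => Iff.rfl
  have hK2inv : ∀ (g : G) (u : U), u ∈ K2 → ρ g u ∈ K2 := by
    intro g u hu
    have h1 := hP g (0, u) ((hK2mem u).mp hu)
    rw [doubleRep_apply] at h1
    simp only [map_zero] at h1
    exact (hK2mem _).mpr h1
  set Q1 : Submodule ℝ U := P.map (LinearMap.fst ℝ U U) with hQ1def
  have hQ1inv : ∀ (g : G) (a : U), a ∈ Q1 → ρ g a ∈ Q1 := by
    intro g a ha
    obtain ⟨x, hx, hxa⟩ := ha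
    exact ⟨doubleRep ρ g x, hP g x hx, congrArg (ρ g) hxa⟩
  rcases hirr.2 K2 hK2inv with hK2 | hK2
  · -- K2 = ⊥ : the first projection is injective on P
    have injP : ∀ x y : U × U, x ∈ P → y ∈ P → x.1 = y.1 → x = y := by
      intro x y hx hy h1
      have hsub : x - y ∈ P := P.sub_mem hx hy
      have h2 : (x - y).1 = 0 := by simp [h1]
      have h3 : (x - y).2 ∈ K2 := by
        rw [hK2mem]
        have : ((0 : U), (x - y).2) = x - y := Prod.ext h2.symm rfl
        rwa [this]
      rw [hK2, Submodule.mem_bot] at h3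
      have : x - y = 0 := Prod.ext (by simpa using h2) (by simpa using h3)
      exact sub_eq_zero.mp this
    have hQ1bot : Q1 ≠ ⊥ := by
      intro hq
      apply hbot
      rw [eq_bot_iff]
      intro x hx
      have h1 : x.1 ∈ Q1 := ⟨x, hx, rfl⟩
      rw [hq, Submodule.mem_bot] at h1
      have h2 : x.2 ∈ K2 := by
        rw [hK2mem]
        have : ((0 : U), x.2) = x := Prod.ext h1.symm rfl
        rwa [this]
      rw [hK2, Submodule.mem_bot] at h2
      simp [Submodule.mem_bot, Prod.ext_iff, h1, h2]
    have hQ1top : Q1 = ⊤ := (hirr.2 Q1 hQ1inv).resolve_left hQ1bot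
    set r : P →ₗ[ℝ] U := (LinearMap.fst ℝ U U).comp P.subtype with hrdef
    have rinj : Function.Injective r := by
      intro x y h
      exact Subtype.ext (injP x y x.2 y.2 h)
    have rsurj : Function.Surjective r := by
      intro a
      have ha : a ∈ Q1 := by rw [hQ1top]; trivial
      obtain ⟨x, hx, hxa⟩ := ha
      exact ⟨⟨x, hx⟩, hxa⟩
    set eqv := LinearEquiv.ofBijective r ⟨rinj, rsurj⟩ with heqv
    set f : U →ₗ[ℝ] U × U := P.subtype.comp eqv.symm.toLinearMap with hfdef
    have hfmem : ∀ u : U, f u ∈ P := fun u => (eqv.symm u).2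
    have fkey : ∀ u : U, (f u).1 = u := fun u => eqv.apply_symm_apply u
    refine ⟨f, ?_, ?_, ?_⟩
    · intro a b h
      have : eqv.symm a = eqv.symm b := Subtype.coe_injective h
      exact eqv.symm.injective this
    · apply le_antisymm
      · rintro x ⟨u, rfl⟩; exact hfmem u
      · intro x hx
        refine ⟨eqv ⟨x, hx⟩, ?_⟩
        simp [hfdef]
    · intro g u
      refine injP _ _ (hfmem _) (hP g (f u) (hfmem u)) ?_
      rw [fkey, doubleRep_apply, fkey]
  · -- K2 = ⊤ : the second copy of U sits inside P
    rcases hirr.2 Q1 hQ1inv with hQ1 | hQ1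
    · refine ⟨LinearMap.inr ℝ U U, LinearMap.inr_injective, ?_, ?_⟩
      · apply le_antisymm
        · rintro x ⟨u, rfl⟩
          exact (hK2mem u).mp (by rw [hK2]; trivial)
        · intro x hx
          have h1 : x.1 ∈ Q1 := ⟨x, hx, rfl⟩
          rw [hQ1, Submodule.mem_bot] at h1
          exact ⟨x.2, Prod.ext (by simp [h1]) rfl⟩
      · intro g u
        rw [doubleRep_apply]
        simp
    · exfalso
      apply htop
      rw [eq_top_iff]
      intro x _
      have h1 : x.1 ∈ Q1 := by rw [hQ1]; trivial
      obtain ⟨y, hy, hyx⟩ := h1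
      have h2 : ((0 : U), x.2 - y.2) ∈ P := (hK2mem _).mp (by rw [hK2]; trivial)
      have : x = y + (0, x.2 - y.2) := by
        refine Prod.ext ?_ ?_ <;> simp [hyx.symm]
      rw [this]
      exact P.add_mem hy h2

/-- Let `H` be an index-two normal subgroup of a finite group `K` and `U`
an irreducible real `H`-module with `K`-invariant character that admits no `K`-extension.
Then every real `K`-module `W` whose restriction to `H` is isomorphic to `2U = U ⊕ U` is
isomorphic to the induced module `Ind_H^K U`. -/
theorem extension_of_double_is_induced {K : Type} [Group K] [Finite K] (H : Subgroup K)
    [H.Normal] (hidx : H.index = 2) {U : Type} [AddCommGroup U] [Module ℝ U]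
    [FiniteDimensional ℝ U] (ρ : Representation ℝ H U) (hirr : IsIrreducibleRep ρ)
    (hinv : charConjInvariant H ρ)
    (hnoext : ¬ ∃ σ : Representation ℝ K U, RepIso (resRep H σ) ρ) :
    ∀ (W : Type) [AddCommGroup W] [Module ℝ W] (ψ : Representation ℝ K W),
      RepIso (resRep H ψ) (doubleRep ρ) → RepIso ψ (indRep H ρ) := by
  intro W _ _ ψ hres
  classical
  obtain ⟨e, he⟩ := hres
  -- `he : ∀ (h : H) (w : W), e (ψ ↑h w) = doubleRep ρ h (e w)` (definitional unfolding of resRep)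
  have he' : ∀ (h : H) (w : W), e (ψ (↑h : K) w) = doubleRep ρ h (e w) := he
  -- an element outside H
  obtain ⟨g0, hg0⟩ : ∃ g0 : K, g0 ∉ H := by
    by_contra hc
    push_neg at hc
    have : H = ⊤ := Subgroup.eq_top_iff' H |>.mpr hc
    rw [this, Subgroup.index_top] at hidx
    exact absurd hidx (by norm_num)
  have hg0inv : g0⁻¹ ∉ H := fun h => hg0 (by simpa using H.inv_mem h)
  have hcos : ∀ k : K, k ∉ H → k * g0⁻¹ ∈ H := by
    intro k hk
    rw [Subgroup.mul_mem_iff_of_index_two hidx]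
    exact ⟨fun h => absurd h hk, fun h => absurd h hg0inv⟩
  -- the induced module is linearly equivalent to U × U
  have hmulH : ∀ (h : H) (k : K), (↑h : K) * k ∈ H ↔ k ∈ H := by
    intro h k
    constructor
    · intro hm
      have := H.mul_mem (H.inv_mem h.2) hm
      simpa [mul_assoc] using this
    · intro hm; exact H.mul_mem h.2 hm
  have hconstr : ∀ (u v : U), (fun k : K => if hk : k ∈ H then ρ ⟨k, hk⟩ u
        else ρ ⟨k * g0⁻¹, hcos k hk⟩ v) ∈ indSubmodule H ρ := by
    intro u v h k
    dsimp only
    by_cases hk : k ∈ H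
    · rw [dif_pos hk, dif_pos ((hmulH h k).mpr hk)]
      have : (⟨(↑h : K) * k, (hmulH h k).mpr hk⟩ : H) = h * ⟨k, hk⟩ := rfl
      rw [this, map_mul]
      rfl
    · have hk' : (↑h : K) * k ∉ H := fun hm => hk ((hmulH h k).mp hm)
      rw [dif_neg hk, dif_neg hk']
      have : (⟨(↑h : K) * k * g0⁻¹, hcos _ hk'⟩ : H) = h * ⟨k * g0⁻¹, hcos k hk⟩ := by
        apply Subtype.ext
        simp [mul_assoc]
      rw [this, map_mul]
      rfl
  let indE : indSubmodule H ρ ≃ₗ[ℝ] U × U :=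
    { toFun := fun f => (f.1 1, f.1 g0)
      map_add' := fun f g => rfl
      map_smul' := fun c f => rfl
      invFun := fun uv => ⟨_, hconstr uv.1 uv.2⟩
      left_inv := by
        intro f
        apply Subtype.ext
        funext k
        dsimp only
        by_cases hk : k ∈ H
        · rw [dif_pos hk]
          have := f.2 ⟨k, hk⟩ 1
          simpa using this.symm
        · rw [dif_neg hk]
          have := f.2 ⟨k * g0⁻¹, hcos k hk⟩ g0
          simpa [inv_mul_cancel_right] using this.symm
      right_inv := by
        intro uv
        dsimp only
        refine Prod.ext ?_ ?_
        · rw [dif_pos H.one_mem]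
          have : (⟨(1 : K), H.one_mem⟩ : H) = 1 := rfl
          rw [this, map_one]
          rfl
        · rw [dif_neg hg0]
          have : (⟨g0 * g0⁻¹, hcos g0 hg0⟩ : H) = 1 := Subtype.ext (mul_inv_cancel g0)
          rw [this, map_one]
          rfl }
  haveI : FiniteDimensional ℝ W := Module.Finite.equiv e.symm
  haveI : FiniteDimensional ℝ (indSubmodule H ρ) := Module.Finite.equiv indE.symm
  have hdim : finrank ℝ W = finrank ℝ (indSubmodule H ρ) := by
    rw [e.finrank_eq, indE.finrank_eq]
  -- the equivariant projection p : W → U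
  set p : W →ₗ[ℝ] U := (LinearMap.fst ℝ U U).comp e.toLinearMap with hpdef
  have hpeq : ∀ (h : H) (w : W), p (ψ (↑h : K) w) = ρ h (p w) := by
    intro h w
    simp only [hpdef, LinearMap.comp_apply, LinearEquiv.coe_coe, he' h w, doubleRep_apply]
    rfl
  -- the canonical equivariant map φ : W → Ind U
  have hφmem : ∀ w : W, (fun k : K => p (ψ k w)) ∈ indSubmodule H ρ := by
    intro w h k
    dsimp only
    rw [map_mul, Module.End.mul_apply, hpeq h (ψ k w)]
  set φ : W →ₗ[ℝ] indSubmodule H ρ :=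
    { toFun := fun w => ⟨fun k => p (ψ k w), hφmem w⟩
      map_add' := by intro w w'; apply Subtype.ext; funext k; simp
      map_smul' := by intro c w; apply Subtype.ext; funext k; simp } with hφdef
  have hφeq : ∀ (g : K) (w : W), φ (ψ g w) = indRep H ρ g (φ w) := by
    intro g w
    apply Subtype.ext
    funext k
    show p (ψ k (ψ g w)) = p (ψ (k * g) w)
    rw [map_mul, Module.End.mul_apply]
  -- ker φ is not everything
  obtain ⟨u0, hu0⟩ := hirr.1
  have hker_ne_top : LinearMap.ker φ ≠ ⊤ := by
    intro hk
    have h1 : φ (e.symm (u0, 0)) = 0 := by rw [← LinearMap.mem_ker, hk]; trivial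
    have h2 : (φ (e.symm (u0, 0))).1 1 = p (e.symm (u0, 0)) := by
      show p (ψ 1 (e.symm (u0, 0))) = _
      rw [map_one, Module.End.one_apply]
    rw [h1] at h2
    apply hu0
    have : p (e.symm (u0, 0)) = u0 := by simp [hpdef]
    rw [← this, ← h2]
    rfl
  -- ker φ is K-invariant
  have hker_inv : ∀ (g : K) (w : W), w ∈ LinearMap.ker φ → ψ g w ∈ LinearMap.ker φ := by
    intro g w hw
    rw [LinearMap.mem_ker] at hw ⊢
    rw [hφeq, hw, map_zero]
  -- ker φ = ⊥, else U would extend to K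
  have hker_bot : LinearMap.ker φ = ⊥ := by
    by_contra hker
    set N := LinearMap.ker φ with hNdef
    set P : Submodule ℝ (U × U) := N.map e.toLinearMap with hPdef
    have hPinv : ∀ (h : H) (x : U × U), x ∈ P → doubleRep ρ h x ∈ P := by
      rintro h x ⟨w, hw, rfl⟩
      exact ⟨ψ (↑h : K) w, hker_inv _ w hw, by
        simp only [LinearEquiv.coe_coe]; exact he' h w⟩
    have hPbot : P ≠ ⊥ := by
      intro hp
      apply hker
      rw [eq_bot_iff]
      intro w hw
      have : e w ∈ P := ⟨w, hw, rfl⟩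
      rw [hp, Submodule.mem_bot] at this
      have := e.injective (by simpa using this : e w = e 0)
      simpa [Submodule.mem_bot] using this
    have hPtop : P ≠ ⊤ := by
      intro hp
      apply hker_ne_top
      rw [eq_top_iff]
      intro w _
      have : e w ∈ P := by rw [hp]; trivial
      obtain ⟨w', hw', hww⟩ := this
      rwa [← e.injective hww]
    obtain ⟨f, hfinj, hfrange, hfeq⟩ := exists_equivariant_embedding ρ hirr P hPinv hPbot hPtop
    -- j : U → W, equivariant embedding with range = ker φ
    set j : U →ₗ[ℝ] W := e.symm.toLinearMap.comp f with hjdef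
    have hjinj : Function.Injective j := fun a b h => hfinj (e.symm.injective h)
    have hjeq : ∀ (h : H) (u : U), j (ρ h u) = ψ (↑h : K) (j u) := by
      intro h u
      apply e.injective
      show e (e.symm (f (ρ h u))) = e (ψ (↑h : K) (e.symm (f u)))
      rw [e.apply_symm_apply, he', e.apply_symm_apply, hfeq]
    have hjrange : LinearMap.range j = N := by
      apply le_antisymm
      · rintro w ⟨u, rfl⟩
        have : f u ∈ P := hfrange ▸ ⟨u, rfl⟩
        obtain ⟨w', hw', hww⟩ := this
        simp only [LinearEquiv.coe_coe] at hww
        show e.symm (f u) ∈ N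
        rw [← hww, e.symm_apply_apply]
        exact hw'
      · intro w hw
        have : e w ∈ LinearMap.range f := hfrange.symm ▸ ⟨w, hw, rfl⟩
        obtain ⟨u, hu⟩ := this
        exact ⟨u, by show e.symm (f u) = w; rw [hu, e.symm_apply_apply]⟩
    have hrinv : ∀ (g : K), ∀ x ∈ LinearMap.range j, ψ g x ∈ LinearMap.range j := by
      intro g x hx
      rw [hjrange] at hx ⊢
      exact hker_inv g x hx
    set E : U ≃ₗ[ℝ] LinearMap.range j := LinearEquiv.ofInjective j hjinj with hEdef
    have hEcoe : ∀ u : U, ((E u : W)) = j u := fun u => rfl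
    set σf : K → (U →ₗ[ℝ] U) := fun g =>
      (E.symm.toLinearMap.comp ((ψ g).restrict (hrinv g))).comp E.toLinearMap with hσfdef
    have hkey : ∀ (g : K) (u : U), j (σf g u) = ψ g (j u) := by
      intro g u
      show j (E.symm (((ψ g).restrict (hrinv g)) (E u))) = ψ g (j u)
      have h1 : ∀ y : LinearMap.range j, j (E.symm y) = (y : W) := by
        intro y
        rw [← hEcoe (E.symm y), E.apply_symm_apply]
      rw [h1]
      show ((ψ g) (E u : W)) = ψ g (j u)
      rw [hEcoe]
    set σ : Representation ℝ K U :=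
      { toFun := σf
        map_one' := by
          apply LinearMap.ext
          intro u
          apply hjinj
          rw [hkey, map_one, Module.End.one_apply, Module.End.one_apply]
        map_mul' := by
          intro g g'
          apply LinearMap.ext
          intro u
          apply hjinj
          rw [hkey, map_mul, Module.End.mul_apply, Module.End.mul_apply,
            hkey, hkey] } with hσdef
    apply hnoext
    refine ⟨σ, LinearEquiv.refl ℝ U, ?_⟩
    intro h u
    show σf (↑h : K) u = ρ h u
    apply hjinj
    rw [hkey, ← hjeq]
  -- φ is injective, hence an isomorphism by dimension count
  have hφinj : Function.Injective φ := LinearMap.ker_eq_bot.mp hker_bot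
  refine ⟨φ.linearEquivOfInjective hφinj hdim, ?_⟩
  intro g w
  rw [LinearMap.linearEquivOfInjective_apply, LinearMap.linearEquivOfInjective_apply, hφeq]
end

section
/- Let H be a normal subgroup of a finite group G with G/H cyclic of odd order, and let U be an irreducible real H-module of real type whose character is G-invariant. Then any two G-extensions of U are isomorphic as G-modules. -/
open Module

/-- Let `H` be a normal subgroup of a finite group `G` with `G/H` cyclic
of odd order, and let `U` be an irreducible real `H`-module of real type (`d(U) = 1`)
whose character is `G`-invariant.  Then any two `G`-extensions of `U` are isomorphic as
`G`-modules. -/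
theorem unique_extension_odd_cyclic {G : Type} [Group G] [Finite G] (H : Subgroup G)
    [H.Normal] (hcyc : IsCyclic (G ⧸ H)) (hodd : Odd (Nat.card (G ⧸ H)))
    {U : Type} [AddCommGroup U] [Module ℝ U] [FiniteDimensional ℝ U]
    (ρ : Representation ℝ H U) (hirr : IsIrreducibleRep ρ)
    (hreal : dimRepHom ρ ρ = 1) (hinv : charConjInvariant H ρ) :
    ∀ (V₁ : Type) [AddCommGroup V₁] [Module ℝ V₁] (V₂ : Type) [AddCommGroup V₂]
      [Module ℝ V₂] (σ₁ : Representation ℝ G V₁) (σ₂ : Representation ℝ G V₂),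
      RepIso (resRep H σ₁) ρ → RepIso (resRep H σ₂) ρ → RepIso σ₁ σ₂ := by
  intro V₁ _ _ V₂ _ _ σ₁ σ₂ h₁ h₂
  obtain ⟨e₁, he₁⟩ := h₁
  obtain ⟨e₂, he₂⟩ := h₂
  -- he₁ : ∀ (g : H) (v : V₁), e₁ (σ₁ ↑g v) = ρ g (e₁ v)
  set f₀ : V₁ →ₗ[ℝ] V₂ := e₂.symm.toLinearMap ∘ₗ e₁.toLinearMap with hf₀def
  have hf₀apply : ∀ v : V₁, f₀ v = e₂.symm (e₁ v) := fun v => rfl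
  have hf₀equiv : ∀ (h : H) (v : V₁), f₀ (σ₁ (h : G) v) = σ₂ (h : G) (f₀ v) := by
    intro h v
    have h1 : e₁ (σ₁ (h : G) v) = ρ h (e₁ v) := he₁ h v
    have h2 : e₂ (σ₂ (h : G) (e₂.symm (e₁ v))) = ρ h (e₂ (e₂.symm (e₁ v))) :=
      he₂ h (e₂.symm (e₁ v))
    rw [e₂.apply_symm_apply] at h2
    rw [hf₀apply, hf₀apply, h1, ← h2, e₂.symm_apply_apply]
  -- the "key": every H-equivariant map V₁ → V₂ is a multiple of f₀
  obtain ⟨u₀, hu₀⟩ := hirr.1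
  have hkey : ∀ T : V₁ →ₗ[ℝ] V₂,
      (∀ (h : H) (v : V₁), T (σ₁ (h : G) v) = σ₂ (h : G) (T v)) → ∃ c : ℝ, T = c • f₀ := by
    intro T hT
    have hid : (LinearMap.id : U →ₗ[ℝ] U) ∈ repHom ρ ρ := fun g u => rfl
    have hidne : (⟨LinearMap.id, hid⟩ : repHom ρ ρ) ≠ 0 := by
      intro hc
      apply hu₀
      have := congrArg (fun f : repHom ρ ρ => (f : U →ₗ[ℝ] U) u₀) hc
      simpa using this
    have hspan := (finrank_eq_one_iff_of_nonzero' (⟨LinearMap.id, hid⟩ : repHom ρ ρ) hidne).1 hreal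
    set S : U →ₗ[ℝ] U := e₂.toLinearMap ∘ₗ T ∘ₗ e₁.symm.toLinearMap with hSdef
    have hSapply : ∀ u : U, S u = e₂ (T (e₁.symm u)) := fun u => rfl
    have hSmem : S ∈ repHom ρ ρ := by
      intro g u
      have hx : e₁ (σ₁ (g : G) (e₁.symm u)) = ρ g (e₁ (e₁.symm u)) := he₁ g (e₁.symm u)
      rw [e₁.apply_symm_apply] at hx
      have hy : e₂ (σ₂ (g : G) (T (e₁.symm u))) = ρ g (e₂ (T (e₁.symm u))) :=
        he₂ g (T (e₁.symm u))
      rw [hSapply, hSapply, ← hx, e₁.symm_apply_apply, hT g (e₁.symm u), hy]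
    obtain ⟨c, hc⟩ := hspan ⟨S, hSmem⟩
    refine ⟨c, ?_⟩
    have hc' : S = c • LinearMap.id := by
      have := congrArg (fun f : repHom ρ ρ => (f : U →ₗ[ℝ] U)) hc
      simpa using this.symm
    ext v
    have : S (e₁ v) = c • (e₁ v) := by rw [hc']; rfl
    rw [hSapply, e₁.symm_apply_apply] at this
    have := congrArg e₂.symm this
    rw [e₂.symm_apply_apply] at this
    simp only [LinearMap.smul_apply, hf₀apply]
    rw [this, map_smul]
  -- the maps T g and the scalars c g
  have hconj : ∀ g : G, g⁻¹ * g = 1 := fun g => inv_mul_cancel g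
  set Tm : G → (V₁ →ₗ[ℝ] V₂) := fun g => (σ₂ g) ∘ₗ f₀ ∘ₗ (σ₁ g⁻¹) with hTmdef
  have hTapply : ∀ (g : G) (v : V₁), Tm g v = σ₂ g (f₀ (σ₁ g⁻¹ v)) := fun g v => rfl
  have hTmem : ∀ g : G, ∀ (h : H) (v : V₁), Tm g (σ₁ (h : G) v) = σ₂ (h : G) (Tm g v) := by
    intro g h v
    set h' : H := ⟨g⁻¹ * (h : G) * g, by
      have := ‹H.Normal›.conj_mem (h : G) h.2 g⁻¹
      simpa using this⟩ with hh'def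
    have hcoe : (h' : G) = g⁻¹ * (h : G) * g := rfl
    have e1 : σ₁ g⁻¹ (σ₁ (h : G) v) = σ₁ (h' : G) (σ₁ g⁻¹ v) := by
      rw [← Module.End.mul_apply, ← map_mul, ← Module.End.mul_apply, ← map_mul, hcoe]
      group
    have e2 : σ₂ g (σ₂ (h' : G) (f₀ (σ₁ g⁻¹ v))) = σ₂ (h : G) (σ₂ g (f₀ (σ₁ g⁻¹ v))) := by
      rw [← Module.End.mul_apply, ← map_mul, ← Module.End.mul_apply, ← map_mul, hcoe]
      group
    rw [hTapply, hTapply, e1, hf₀equiv h', e2]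
  choose c hc using fun g => hkey (Tm g) (hTmem g)
  have hf₀ne : f₀ (e₁.symm u₀) ≠ 0 := by
    rw [hf₀apply, e₁.apply_symm_apply]
    simpa using hu₀
  have hcinj : ∀ a b : ℝ, a • f₀ = b • f₀ → a = b := by
    intro a b hab
    have := congrArg (fun f : V₁ →ₗ[ℝ] V₂ => f (e₁.symm u₀)) hab
    simp only [LinearMap.smul_apply] at this
    by_contra hne
    exact hf₀ne (by
      have := sub_eq_zero.2 this
      rw [← sub_smul] at this
      rcases smul_eq_zero.1 this with h | h
      · exact absurd (sub_eq_zero.1 h) hne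
      · exact absurd h (fun hh => hf₀ne hh)) 
  -- c is 1 on H
  have hcH : ∀ h : G, h ∈ H → c h = 1 := by
    intro h hh
    apply hcinj
    rw [← hc h]
    ext v
    have : (h : G)⁻¹ = ((⟨h, hh⟩ : H)⁻¹ : H) := rfl
    rw [hTapply, one_smul, this, hf₀equiv (⟨h, hh⟩ : H)⁻¹ v, ← Module.End.mul_apply, ← map_mul]
    simp
  -- multiplicativity
  have hcmul : ∀ a b : G, c (a * b) = c a * c b := by
    intro a b
    apply hcinj
    rw [← hc (a * b)]
    ext v
    have h1 : Tm (a * b) v = σ₂ a (Tm b (σ₁ a⁻¹ v)) := by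
      rw [hTapply, hTapply, mul_inv_rev, ← Module.End.mul_apply (σ₁ b⁻¹), ← map_mul,
        ← Module.End.mul_apply (σ₂ a), ← map_mul]
    rw [h1, hc b]
    simp only [LinearMap.smul_apply, map_smul, mul_smul, mul_comm (c a) (c b)]
    rw [← hTapply a v, hc a]
    simp [mul_smul]
  have hcpow : ∀ (g : G) (n : ℕ), c (g ^ n) = (c g) ^ n := by
    intro g n
    induction n with
    | zero =>
      simp only [pow_zero]
      have : (1 : G) ∈ H := H.one_mem
      rw [hcH 1 this]
    | succ n ih => rw [pow_succ, hcmul, ih, pow_succ]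
  -- c = 1 everywhere
  have hc1 : ∀ g : G, c g = 1 := by
    intro g
    have hmem : g ^ H.index ∈ H := Subgroup.pow_index_mem H g
    have h1 : (c g) ^ H.index = 1 := by rw [← hcpow, hcH _ hmem]
    have hoddi : Odd H.index := hodd
    have := hoddi.strictMono_pow (R := ℝ)
    have h2 : (c g) ^ H.index = (1 : ℝ) ^ H.index := by rw [h1, one_pow]
    exact this.injective h2
  -- conclude
  refine ⟨e₁.trans e₂.symm, ?_⟩
  intro g v
  have hT : Tm g = (1 : ℝ) • f₀ := by rw [← hc1 g]; exact hc g
  have := congrArg (fun f : V₁ →ₗ[ℝ] V₂ => f (σ₁ g v)) hT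
  simp only [LinearMap.smul_apply, one_smul, hTapply] at this
  have hfix : σ₁ g⁻¹ (σ₁ g v) = v := by
    rw [← Module.End.mul_apply, ← map_mul, inv_mul_cancel, map_one, Module.End.one_apply]
  rw [hfix] at this
  show e₂.symm (e₁ (σ₁ g v)) = σ₂ g (e₂.symm (e₁ v))
  rw [← hf₀apply, ← hf₀apply, ← this]
end
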